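/- arXiv:1910.05133 — 3 statements merged into one kernel-verified Lean document; each statement's English description precedes it below -/
import Mathlib

section
/- Let T = (V, E) be an infinite, locally finite tree with a distinguished root vertex o, with vertex degrees bounded above by some constant Δ. If T is non-amenable, then there exists a constant M such that for every v ∈ V, every connected component of the subgraph of T induced on (V \ T_r) ∪ {v} has at most M vertices (i.e., T satisfies condition (C1) with constant M). -/
open SimpleGraph

variable {V : Type*}

/-- Reachability within a set `s`: there is a walk from `a` to `b` all of whose
vertices lie in `s` (i.e. reachability in the induced subgraph on `s`). -/
def ReachableWithin (G : SimpleGraph V) (s : Set V) : V → V → Prop :=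
  Relation.ReflTransGen (fun x y => G.Adj x y ∧ x ∈ s ∧ y ∈ s)

/-- The connected component of `u` in the subgraph of `G` induced on `s`. -/
def componentIn (G : SimpleGraph V) (s : Set V) (u : V) : Set V :=
  {w | w ∈ s ∧ ReachableWithin G s u w}

/-- The backbone of `G` relative to the vertex set `s`, rooted at `o`: vertices lying on
an infinite injective path starting at `o` all of whose vertices are in `s`. -/
def BackboneIn (G : SimpleGraph V) (s : Set V) (o : V) : Set V :=
  {v | ∃ f : ℕ → V, f 0 = o ∧ Function.Injective f ∧ (∀ n, f n ∈ s) ∧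
    (∀ n, G.Adj (f n) (f (n + 1))) ∧ ∃ k, f k = v}

/-- The backbone `T_r` of `G` rooted at `o`: vertices lying on an infinite injective
path starting at the root `o`. -/
def Backbone (G : SimpleGraph V) (o : V) : Set V :=
  BackboneIn G Set.univ o

/-- The edge boundary of a vertex set `S`: edges of `G` with exactly one endpoint in `S`. -/
def edgeBdry (G : SimpleGraph V) (S : Set V) : Set (Sym2 V) :=
  {e | ∃ a b : V, G.Adj a b ∧ e = s(a, b) ∧ a ∈ S ∧ b ∉ S}

/-- The degree of `u` in the subgraph of `G` induced on `s`. -/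
noncomputable def degIn (G : SimpleGraph V) (s : Set V) (u : V) : ℕ :=
  (G.neighborSet u ∩ s).ncard

/-- Condition (C1) with constant `M`: for every vertex `v`, every connected component of
the subgraph induced on `(V \ T_r) ∪ {v}` has at most `M` vertices. -/
def CondC1 (G : SimpleGraph V) (o : V) (M : ℕ) : Prop :=
  ∀ v u : V, u ∈ (Backbone G o)ᶜ ∪ {v} →
    (componentIn G ((Backbone G o)ᶜ ∪ {v}) u).ncard ≤ M

/-- Condition (C2) with constant `M`: there is no path `u 0, u 1, …, u M` in the subgraph
induced on the backbone `T_r` all of whose vertices have degree `2` in that subgraph. -/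
def CondC2 (G : SimpleGraph V) (o : V) (M : ℕ) : Prop :=
  ¬ ∃ u : ℕ → V, (∀ j, j ≤ M → u j ∈ Backbone G o) ∧
    (∀ j, j < M → G.Adj (u j) (u (j + 1))) ∧
    (∀ j k, j ≤ M → k ≤ M → u j = u k → j = k) ∧
    (∀ j, j ≤ M → degIn G (Backbone G o) (u j) = 2)

/-- Non-amenability: the edge boundary of every finite nonempty vertex set is at least a
fixed positive proportion of its size. -/
def NonAmenable (G : SimpleGraph V) : Prop :=
  ∃ c : ℝ, 0 < c ∧ ∀ S : Set V, S.Finite → S.Nonempty →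
    c * (S.ncard : ℝ) ≤ ((edgeBdry G S).ncard : ℝ)

/-- `K` is connected in `G`: any two vertices of `K` are joined by a walk inside `K`. -/
def ConnectedIn (G : SimpleGraph V) (K : Set V) : Prop :=
  ∀ a ∈ K, ∀ b ∈ K, ReachableWithin G K a b

/-- `|K|_D`: the sum over the vertices of the finite set `K` of their degrees in `G`. -/
noncomputable def degSumF (G : SimpleGraph V) (K : Finset V) : ℕ :=
  ∑ v ∈ K, (G.neighborSet v).ncard

/-- The edge-expansion constant `Φ_E(G)`. -/
noncomputable def expConst (G : SimpleGraph V) : ℝ :=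
  sInf {x : ℝ | ∃ K : Finset V, K.Nonempty ∧ ConnectedIn G ↑K ∧
    x = ((edgeBdry G ↑K).ncard : ℝ) / (degSumF G K : ℝ)}

section Aux
variable {G : SimpleGraph V}

lemma aux_rw_mem {s : Set V} {a b : V} (h : ReachableWithin G s a b) (ha : a ∈ s) : b ∈ s := by
  induction h with
  | refl => exact ha
  | tail _ h ih => exact h.2.2

lemma aux_rw_symm {s : Set V} {a b : V} (h : ReachableWithin G s a b) :
    ReachableWithin G s b a :=
  by
    haveI : Std.Symm (fun x y => G.Adj x y ∧ x ∈ s ∧ y ∈ s) := ⟨fun x y h => ⟨h.1.symm, h.2.2, h.2.1⟩⟩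
    unfold ReachableWithin at h ⊢
    exact Std.Symm.symm _ _ h

lemma aux_rw_mono {s t : Set V} (hst : s ⊆ t) {a b : V} (h : ReachableWithin G s a b) :
    ReachableWithin G t a b :=
  Relation.ReflTransGen.mono (fun x y h => ⟨h.1, hst h.2.1, hst h.2.2⟩) _ _ h

lemma aux_rw_walk {s : Set V} {a b : V} (ha : a ∈ s) (h : ReachableWithin G s a b) :
    ∃ p : G.Walk a b, ∀ x ∈ p.support, x ∈ s := by
  induction h with
  | refl => exact ⟨Walk.nil, by simpa using ha⟩
  | tail _ hbc ih =>
      obtain ⟨p, hp⟩ := ih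
      refine ⟨p.concat hbc.1, ?_⟩
      intro x hx
      rw [Walk.support_concat] at hx
      rw [List.mem_append, List.mem_singleton] at hx
      rcases hx with h | h
      · exact hp x h
      · exact h ▸ hbc.2.2

lemma aux_ray_walk (f : ℕ → V) (hadj : ∀ n, G.Adj (f n) (f (n + 1))) (k : ℕ) :
    ∃ p : G.Walk (f 0) (f k), ∀ x ∈ p.support, ∃ j, x = f j := by
  induction k with
  | zero => exact ⟨Walk.nil, by simp⟩
  | succ k ih =>
      obtain ⟨p, hp⟩ := ih
      refine ⟨p.concat (hadj k), ?_⟩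
      intro x hx
      rw [Walk.support_concat] at hx
      rw [List.mem_append, List.mem_singleton] at hx
      rcases hx with h | h
      · exact hp x h
      · exact ⟨k + 1, h⟩

lemma aux_ray_mem {o : V} {f : ℕ → V} (h0 : f 0 = o) (hinj : Function.Injective f)
    (hadj : ∀ n, G.Adj (f n) (f (n + 1))) (j : ℕ) : f j ∈ Backbone G o :=
  ⟨f, h0, hinj, fun _ => trivial, hadj, j, rfl⟩

lemma aux_bb_walk {o b₁ b₂ : V} (h1 : b₁ ∈ Backbone G o) (h2 : b₂ ∈ Backbone G o) :
    ∃ p : G.Walk b₁ b₂, ∀ x ∈ p.support, x ∈ Backbone G o := by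
  obtain ⟨f, hf0, hfi, -, hfa, k₁, hk₁⟩ := h1
  obtain ⟨g, hg0, hgi, -, hga, k₂, hk₂⟩ := h2
  obtain ⟨p, hp⟩ := aux_ray_walk f hfa k₁
  obtain ⟨q, hq⟩ := aux_ray_walk g hga k₂
  refine ⟨(p.reverse.copy hk₁ (hf0.trans hg0.symm)).append (q.copy rfl hk₂), ?_⟩
  intro x hx
  rw [Walk.mem_support_append_iff] at hx
  rcases hx with hx | hx
  · rw [Walk.support_copy, Walk.support_reverse, List.mem_reverse] at hx
    obtain ⟨j, rfl⟩ := hp x hx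
    exact aux_ray_mem hf0 hfi hfa j
  · rw [Walk.support_copy] at hx
    obtain ⟨j, rfl⟩ := hq x hx
    exact aux_ray_mem hg0 hgi hga j

lemma aux_attach {o a₁ a₂ b₁ b₂ : V} (hT : G.IsTree)
    (hb₁ : b₁ ∈ Backbone G o) (hb₂ : b₂ ∈ Backbone G o)
    (e₁ : G.Adj a₁ b₁) (e₂ : G.Adj a₂ b₂)
    (w : G.Walk a₁ a₂) (hw : ∀ x ∈ w.support, x ∉ Backbone G o) :
    a₁ = a₂ ∧ b₁ = b₂ := by
  classical
  set q : G.Walk a₁ a₂ := w.bypass with hqdef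
  have hqpath : q.IsPath := w.bypass_isPath
  have hqsup : ∀ x ∈ q.support, x ∉ Backbone G o :=
    fun x hx => hw x (w.support_bypass_subset hx)
  have ha₁ : a₁ ∉ Backbone G o := hw _ w.start_mem_support
  have hb1q : b₁ ∉ q.support := fun h => hqsup _ h hb₁
  have hb2q : b₂ ∉ q.support := fun h => hqsup _ h hb₂
  by_cases hbb : b₁ = b₂
  · subst hbb
    refine ⟨?_, rfl⟩
    by_contra hne
    have h2path : (Walk.cons e₁ (Walk.cons e₂.symm Walk.nil)).IsPath := by
      simp [Walk.isPath_def, e₁.ne, hne, e₂.ne']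
    obtain ⟨r, -, hr⟩ := hT.existsUnique_path a₁ a₂
    have heq : q = Walk.cons e₁ (Walk.cons e₂.symm Walk.nil) :=
      (hr q hqpath).trans (hr _ h2path).symm
    apply hb1q
    rw [heq]
    simp
  · exfalso
    set P1 : G.Walk b₁ b₂ := Walk.cons e₁.symm (q.append (Walk.cons e₂ Walk.nil)) with hP1
    have hsup1 : P1.support = b₁ :: (q.support ++ [b₂]) := by
      simp [hP1, Walk.support_append]
    have hP1path : P1.IsPath := by
      rw [Walk.isPath_def, hsup1]
      have := hqpath.support_nodup
      simp [List.nodup_append, hb1q, hb2q, hbb, this]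
      exact fun a ha h => hb2q (h ▸ ha)
    obtain ⟨r, hrsup⟩ := aux_bb_walk hb₁ hb₂
    obtain ⟨p, -, hp⟩ := hT.existsUnique_path b₁ b₂
    have heq : P1 = r.bypass := (hp P1 hP1path).trans (hp _ r.bypass_isPath).symm
    have ha1mem : a₁ ∈ P1.support := by
      rw [hsup1]
      simp [q.start_mem_support]
    rw [heq] at ha1mem
    exact ha₁ (hrsup _ (r.support_bypass_subset ha1mem))

end Aux

section Aux2
variable {G : SimpleGraph V}

lemma aux_comp_bound {o : V} (hT : G.IsTree) {c : ℝ} (hc : 0 < c)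
    (hNA : ∀ S : Set V, S.Finite → S.Nonempty → c * (S.ncard : ℝ) ≤ ((edgeBdry G S).ncard : ℝ))
    {u : V} (hu : u ∈ (Backbone G o)ᶜ)
    (hfin : (componentIn G (Backbone G o)ᶜ u).Finite) :
    (componentIn G (Backbone G o)ᶜ u).ncard ≤ ⌊c⁻¹⌋₊ := by
  set D := componentIn G (Backbone G o)ᶜ u with hD
  have hune : u ∈ D := ⟨hu, Relation.ReflTransGen.refl⟩
  have hsub : ∀ e₁ ∈ edgeBdry G D, ∀ e₂ ∈ edgeBdry G D, e₁ = e₂ := by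
    rintro e₁ ⟨x₁, y₁, hadj₁, rfl, hx₁, hy₁⟩ e₂ ⟨x₂, y₂, hadj₂, rfl, hx₂, hy₂⟩
    have hyB : ∀ x y, G.Adj x y → x ∈ D → y ∉ D → y ∈ Backbone G o := by
      intro x y hxy hxD hyD
      by_contra hyB
      exact hyD ⟨hyB, hxD.2.tail ⟨hxy, hxD.1, hyB⟩⟩
    have hy₁B := hyB _ _ hadj₁ hx₁ hy₁
    have hy₂B := hyB _ _ hadj₂ hx₂ hy₂
    obtain ⟨w, hw⟩ := aux_rw_walk hx₁.1 ((aux_rw_symm hx₁.2).trans hx₂.2)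
    obtain ⟨hae, hbe⟩ := aux_attach hT hy₁B hy₂B hadj₁ hadj₂ w hw
    rw [hae, hbe]
  have hb1 : (edgeBdry G D).ncard ≤ 1 := by
    rcases Set.eq_empty_or_nonempty (edgeBdry G D) with h | ⟨e, he⟩
    · simp [h]
    · have hss : edgeBdry G D ⊆ {e} := fun e' he' => hsub e' he' e he
      calc (edgeBdry G D).ncard ≤ ({e} : Set (Sym2 V)).ncard :=
            Set.ncard_le_ncard hss (Set.finite_singleton e)
        _ = 1 := Set.ncard_singleton e
  have h1 : c * (D.ncard : ℝ) ≤ 1 := by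
    refine (hNA D hfin ⟨u, hune⟩).trans ?_
    exact_mod_cast hb1
  have h2 : (D.ncard : ℝ) ≤ c⁻¹ := by
    rw [← one_div]
    rw [le_div_iff₀ hc, mul_comm]
    exact h1
  exact Nat.le_floor h2

lemma aux_ncard_biUnion_le {α ι : Type*} (F : Finset ι) (f : ι → Set α) :
    (⋃ i ∈ F, f i).ncard ≤ ∑ i ∈ F, (f i).ncard := by
  classical
  induction F using Finset.induction with
  | empty => simp
  | @insert a F' ha ih =>
      rw [Finset.sum_insert ha, Finset.set_biUnion_insert]
      exact (Set.ncard_union_le _ _).trans (by omega)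

end Aux2

/-- A non-amenable bounded-degree infinite tree satisfies condition (C1)
for some constant `M`. -/
theorem statement1 {V : Type*} (G : SimpleGraph V) (o : V) (Δ : ℕ)
    (hT : G.IsTree) (hinf : Infinite V)
    (hdeg : ∀ v : V, (G.neighborSet v).Finite ∧ (G.neighborSet v).ncard ≤ Δ)
    (hNA : NonAmenable G) :
    ∃ M : ℕ, CondC1 G o M := by
  classical
  obtain ⟨c, hc, hNA'⟩ := hNA
  set N := ⌊c⁻¹⌋₊ with hN
  refine ⟨1 + (Δ + 1) * N, ?_⟩
  intro v u hu
  set Bb := Backbone G o with hBb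
  set s : Set V := Bbᶜ ∪ {v} with hs
  set C := componentIn G s u with hC
  have hNM : N ≤ 1 + (Δ + 1) * N := by
    calc N = 1 * N := (one_mul N).symm
      _ ≤ (Δ + 1) * N := Nat.mul_le_mul_right N (by omega)
      _ ≤ 1 + (Δ + 1) * N := by omega
  by_cases hfin : C.Finite
  swap
  · rw [Set.Infinite.ncard (fun h => hfin h)]
    exact Nat.zero_le _
  have huC : u ∈ C := ⟨hu, Relation.ReflTransGen.refl⟩
  by_cases hvC : v ∈ C
  · by_cases hvB : v ∈ Bb
    · -- v is a backbone vertex lying in the component: decompose C as {v} plus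
      -- the components of the neighbors of v in the complement of the backbone.
      have hvs : v ∈ s := Or.inr rfl
      set F := ((hdeg v).1.inter_of_left Bbᶜ).toFinset with hF
      have hRWuv : ReachableWithin G s u v := hvC.2
      have key : ∀ w, ReachableWithin G s v w →
          w = v ∨ ∃ x, G.Adj v x ∧ x ∈ Bbᶜ ∧ ReachableWithin G Bbᶜ x w := by
        intro w h
        induction h with
        | refl => exact Or.inl rfl
        | @tail b d hvb hbd ih =>
            by_cases hdv : d = v
            · exact Or.inl hdv
            · have hdB : d ∈ Bbᶜ := by
                rcases hbd.2.2 with h | h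
                · exact h
                · exact absurd (Set.mem_singleton_iff.mp h) hdv
              right
              rcases ih with rfl | ⟨x, hxadj, hxB, hxw⟩
              · exact ⟨d, hbd.1, hdB, Relation.ReflTransGen.refl⟩
              · have hbB : b ∈ Bbᶜ := aux_rw_mem hxw hxB
                exact ⟨x, hxadj, hxB, hxw.tail ⟨hbd.1, hbB, hdB⟩⟩
      have hsubC : ∀ x ∈ F, componentIn G Bbᶜ x ⊆ C := by
        intro x hxF
        rw [hF, Set.Finite.mem_toFinset] at hxF
        intro w hw
        refine ⟨Or.inl hw.1, ?_⟩
        have hux : ReachableWithin G s u x := hRWuv.tail ⟨hxF.1, hvs, Or.inl hxF.2⟩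
        exact hux.trans (aux_rw_mono Set.subset_union_left hw.2)
      have hcover : C ⊆ {v} ∪ ⋃ x ∈ F, componentIn G Bbᶜ x := by
        intro w hw
        rcases key w ((aux_rw_symm hRWuv).trans hw.2) with rfl | ⟨x, hxadj, hxB, hxw⟩
        · exact Or.inl rfl
        · have hxF : x ∈ F := by
            rw [hF, Set.Finite.mem_toFinset]
            exact ⟨hxadj, hxB⟩
          exact Or.inr (Set.mem_biUnion hxF ⟨aux_rw_mem hxw hxB, hxw⟩)
      have hCeq : C = {v} ∪ ⋃ x ∈ F, componentIn G Bbᶜ x := by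
        refine subset_antisymm hcover (Set.union_subset ?_ ?_)
        · simpa using hvC
        · exact Set.iUnion₂_subset hsubC
      rw [hCeq]
      refine (Set.ncard_union_le _ _).trans ?_
      have hsum : (⋃ x ∈ F, componentIn G Bbᶜ x).ncard
          ≤ ∑ x ∈ F, (componentIn G Bbᶜ x).ncard := aux_ncard_biUnion_le F _
      have heach : ∀ x ∈ F, (componentIn G Bbᶜ x).ncard ≤ N := by
        intro x hxF
        have hxF' := hxF
        rw [hF, Set.Finite.mem_toFinset] at hxF'
        exact aux_comp_bound hT hc hNA' hxF'.2 (hfin.subset (hsubC x hxF))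
      have hsum2 : ∑ x ∈ F, (componentIn G Bbᶜ x).ncard ≤ F.card * N := by
        have := Finset.sum_le_card_nsmul F _ N heach
        simpa using this
      have hcard : F.card ≤ Δ := by
        have hFc : F.card = (G.neighborSet v ∩ Bbᶜ).ncard := by
          rw [hF, Set.ncard_eq_toFinset_card _ ((hdeg v).1.inter_of_left Bbᶜ)]
        rw [hFc]
        exact le_trans (Set.ncard_le_ncard Set.inter_subset_left (hdeg v).1) (hdeg v).2
      have hmul : F.card * N ≤ (Δ + 1) * N := Nat.mul_le_mul_right N (by omega)
      have h1 : ({v} : Set V).ncard = 1 := Set.ncard_singleton v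
      omega
    · -- v is not a backbone vertex: the induced set is just the complement of the backbone.
      have hseq : s = Bbᶜ := Set.union_eq_self_of_subset_right (Set.singleton_subset_iff.mpr hvB)
      have hCeq : C = componentIn G Bbᶜ u := by rw [hC, hseq]
      have hu' : u ∈ Bbᶜ := hseq ▸ hu
      rw [hCeq]
      refine (aux_comp_bound hT hc hNA' hu' ?_).trans hNM
      rw [← hCeq]; exact hfin
  · -- v is not in the component: C is a component of the complement of the backbone.
    have hune : u ≠ v := fun h => hvC (h ▸ huC)
    have huB : u ∈ Bbᶜ := by
      rcases hu with h | h
      · exact h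
      · exact absurd (Set.mem_singleton_iff.mp h) hune
    have key : ∀ w, ReachableWithin G s u w → ReachableWithin G Bbᶜ u w := by
      intro w h
      induction h with
      | refl => exact Relation.ReflTransGen.refl
      | @tail b d hub hbd ih =>
          have hbC : b ∈ C := ⟨hbd.2.1, hub⟩
          have hdC : d ∈ C := ⟨hbd.2.2, hub.tail hbd⟩
          have hbB : b ∈ Bbᶜ := by
            rcases hbd.2.1 with h | h
            · exact h
            · exact absurd (h ▸ hbC) hvC
          have hdB : d ∈ Bbᶜ := by
            rcases hbd.2.2 with h | h
            · exact h
            · exact absurd (h ▸ hdC) hvC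
          exact ih.tail ⟨hbd.1, hbB, hdB⟩
    have hCeq : C = componentIn G Bbᶜ u := by
      ext w
      constructor
      · rintro ⟨hws, hrw⟩
        have hwC : w ∈ C := ⟨hws, hrw⟩
        have hwB : w ∈ Bbᶜ := by
          rcases hws with h | h
          · exact h
          · exact absurd (h ▸ hwC) hvC
        exact ⟨hwB, key w hrw⟩
      · rintro ⟨hwB, hrw⟩
        exact ⟨Or.inl hwB, aux_rw_mono Set.subset_union_left hrw⟩
    rw [hCeq]
    refine (aux_comp_bound hT hc hNA' huB ?_).trans hNM
    rw [← hCeq]; exact hfin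
end

section
/- Let T = (V, E) be an infinite, locally finite tree with a distinguished root vertex o, with vertex degrees bounded above by some constant Δ. If T is non-amenable, then there exists a constant M such that there is no path u₀, u₁, …, u_M in the subgraph of T induced on T_r in which every vertex u_j has degree exactly 2 in the induced subgraph on T_r (i.e., T satisfies condition (C2) with constant M). -/
open SimpleGraph

variable {V : Type*}

section AuxLemmas

variable {G : SimpleGraph V}

lemma componentIn_subset (G : SimpleGraph V) (s : Set V) (u : V) :
    componentIn G s u ⊆ s := fun _ h => h.1

lemma mem_componentIn_self {s : Set V} {u : V} (hu : u ∈ s) :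
    u ∈ componentIn G s u := ⟨hu, Relation.ReflTransGen.refl⟩

lemma mem_backbone_of_ray {o : V} {f : ℕ → V} (h0 : f 0 = o) (hinj : Function.Injective f)
    (hadj : ∀ n, G.Adj (f n) (f (n + 1))) (i : ℕ) : f i ∈ Backbone G o :=
  ⟨f, h0, hinj, fun _ => trivial, hadj, i, rfl⟩

lemma exists_walk_of_reachableWithin {s : Set V} {a b : V}
    (h : ReachableWithin G s a b) (ha : a ∈ s) :
    ∃ p : G.Walk a b, ∀ v ∈ p.support, v ∈ s := by
  induction h with
  | refl => exact ⟨SimpleGraph.Walk.nil, by simpa using ha⟩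
  | @tail b c hab h2 ih =>
    obtain ⟨p, hp⟩ := ih
    refine ⟨p.concat h2.1, ?_⟩
    intro v hv
    rw [SimpleGraph.Walk.support_concat, List.mem_append] at hv
    rcases hv with hv | hv
    · exact hp v hv
    · simp only [List.mem_singleton] at hv; subst hv; exact h2.2.2

lemma reachableWithin_componentIn {s : Set V} {y z : V} (hy : y ∈ s)
    (h : ReachableWithin G s y z) :
    ReachableWithin G (componentIn G s y) y z := by
  induction h with
  | refl => exact Relation.ReflTransGen.refl
  | @tail b c hab h2 ih =>
    have hbmem : b ∈ componentIn G s y := ⟨by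
      induction hab with
      | refl => exact hy
      | tail _ h3 _ => exact h3.2.2, hab⟩
    exact ih.tail ⟨h2.1, hbmem, ⟨h2.2.2, hab.tail h2⟩⟩

lemma mem_component_of_reachableWithin {s : Set V} {x z : V}
    (h : ReachableWithin G s x z) :
    z = x ∨ ∃ y, G.Adj x y ∧ y ∈ s ∧ z ∈ componentIn G (s \ {x}) y := by
  induction h with
  | refl => exact Or.inl rfl
  | @tail b c hab h2 ih =>
    rcases ih with rfl | ⟨y, hxy, hys, hby⟩
    · right
      refine ⟨c, h2.1, h2.2.2, mem_componentIn_self ⟨h2.2.2, ?_⟩⟩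
      simpa using h2.1.ne'
    · by_cases hcx : c = x
      · exact Or.inl hcx
      · right
        exact ⟨y, hxy, hys, ⟨⟨h2.2.2, hcx⟩, hby.2.tail ⟨h2.1, hby.1, ⟨h2.2.2, hcx⟩⟩⟩⟩

lemma konig_step (hlf : ∀ v : V, (G.neighborSet v).Finite) {x : V} {t : Set V}
    (hx : x ∈ t) (ht : t.Infinite) (hconn : ∀ z ∈ t, ReachableWithin G t x z) :
    ∃ y u, G.Adj x y ∧ u ⊆ t \ {x} ∧ y ∈ u ∧ u.Infinite ∧
      ∀ z ∈ u, ReachableWithin G u y z := by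
  have hcov : t \ {x} ⊆ ⋃ y ∈ G.neighborSet x ∩ t, componentIn G (t \ {x}) y := by
    rintro z ⟨hz, hzx⟩
    rcases mem_component_of_reachableWithin (hconn z hz) with rfl | ⟨y, hxy, hys, hzy⟩
    · exact absurd rfl hzx
    · exact Set.mem_biUnion (⟨hxy, hys⟩ : y ∈ G.neighborSet x ∩ t) hzy
  have hex : ∃ y ∈ G.neighborSet x ∩ t, (componentIn G (t \ {x}) y).Infinite := by
    by_contra hc
    push_neg at hc
    have hfin : (t \ {x}).Finite :=
      (Set.Finite.biUnion ((hlf x).inter_of_left t) hc).subset hcov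
    exact (ht.diff (Set.finite_singleton x)) hfin
  obtain ⟨y, ⟨hxy, hyt⟩, hyinf⟩ := hex
  have hy' : y ∈ t \ {x} := ⟨hyt, by simpa using (G.adj_symm hxy).ne⟩
  exact ⟨y, componentIn G (t \ {x}) y, hxy, componentIn_subset _ _ _,
    mem_componentIn_self hy', hyinf,
    fun z hz => reachableWithin_componentIn hy' hz.2⟩

lemma exists_ray_in (hlf : ∀ v : V, (G.neighborSet v).Finite) {s : Set V} {w : V}
    (hw : w ∈ s) (hinf : (componentIn G s w).Infinite) :
    ∃ r : ℕ → V, r 0 = w ∧ Function.Injective r ∧ (∀ n, r n ∈ componentIn G s w) ∧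
      ∀ n, G.Adj (r n) (r (n + 1)) := by
  classical
  set P : V × Set V → Prop := fun p => p.1 ∈ p.2 ∧ p.2.Infinite ∧
    ∀ z ∈ p.2, ReachableWithin G p.2 p.1 z with hP
  have key : ∀ p : {q // P q}, ∃ p' : {q // P q},
      G.Adj p.1.1 p'.1.1 ∧ p'.1.2 ⊆ p.1.2 \ {p.1.1} := by
    rintro ⟨⟨x, t⟩, hx, ht, hconn⟩
    obtain ⟨y, u, hxy, hu, hyu, huinf, hconn'⟩ := konig_step hlf hx ht hconn
    exact ⟨⟨(y, u), hyu, huinf, hconn'⟩, hxy, hu⟩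
  choose F hF1 hF2 using key
  have hP0 : P (w, componentIn G s w) :=
    ⟨mem_componentIn_self hw, hinf, fun z hz => reachableWithin_componentIn hw hz.2⟩
  let seq : ℕ → {q // P q} := fun n => F^[n] ⟨(w, componentIn G s w), hP0⟩
  have hseq : ∀ n, seq (n + 1) = F (seq n) :=
    fun n => Function.iterate_succ_apply' F n _
  set r : ℕ → V := fun n => (seq n).1.1 with hr
  set t : ℕ → Set V := fun n => (seq n).1.2 with htdef
  have hmem : ∀ n, r n ∈ t n := fun n => (seq n).2.1
  have hadj : ∀ n, G.Adj (r n) (r (n + 1)) := by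
    intro n
    have := hF1 (seq n)
    simpa [hr, hseq n] using this
  have hsub : ∀ n, t (n + 1) ⊆ t n \ {r n} := by
    intro n
    have := hF2 (seq n)
    simpa [htdef, hr, hseq n] using this
  have hmono : ∀ n m, n ≤ m → t m ⊆ t n := by
    intro n m hnm
    induction m with
    | zero => simpa [Nat.le_zero.mp hnm] using Set.Subset.rfl
    | succ k ih =>
      rcases Nat.lt_or_ge n (k + 1) with h | h
      · exact ((hsub k).trans (Set.diff_subset)).trans (ih (Nat.lt_succ_iff.mp h))
      · have : n = k + 1 := le_antisymm hnm h
        subst this; exact Set.Subset.rfl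
  have hne : ∀ n m, n < m → r m ≠ r n := by
    intro n m hnm
    have h1 : r m ∈ t m := hmem m
    have h2 : t m ⊆ t (n + 1) := hmono (n + 1) m hnm
    have h3 : r m ∈ t n \ {r n} := hsub n (h2 h1)
    simpa using h3.2
  have hinj : Function.Injective r := by
    intro a b hab
    rcases lt_trichotomy a b with h | h | h
    · exact absurd hab.symm (hne a b h)
    · exact h
    · exact absurd hab (hne b a h)
  have h0 : r 0 = w := rfl
  have ht0 : t 0 = componentIn G s w := rfl
  refine ⟨r, h0, hinj, fun n => ?_, hadj⟩
  rw [← ht0]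
  exact hmono 0 n (Nat.zero_le n) (hmem n)

lemma reachableWithin_symm {s : Set V} : Symmetric (ReachableWithin G s) := by
  intro a b h
  induction h with
  | refl => exact Relation.ReflTransGen.refl
  | tail _ h2 ih => exact Relation.ReflTransGen.head ⟨h2.1.symm, h2.2.2, h2.2.1⟩ ih

lemma backbone_reachable {o b : V} (hb : b ∈ Backbone G o) :
    ReachableWithin G (Backbone G o) o b := by
  obtain ⟨f, hf0, hfinj, -, hfadj, k, hfk⟩ := hb
  have hback : ∀ i, f i ∈ Backbone G o := mem_backbone_of_ray hf0 hfinj hfadj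
  subst hfk
  induction k with
  | zero => rw [hf0]; exact Relation.ReflTransGen.refl
  | succ n ih => exact ih.tail ⟨hfadj n, hback n, hback (n + 1)⟩

lemma component_finite (hT : G.IsTree) (hlf : ∀ v : V, (G.neighborSet v).Finite)
    {o u w : V} (hu : u ∈ Backbone G o) (huw : G.Adj u w) (hw : w ∉ Backbone G o) :
    (componentIn G (Backbone G o)ᶜ w).Finite := by
  by_contra hinf
  rw [← Set.not_infinite, not_not] at hinf
  obtain ⟨r, hr0, hrinj, hrmem, hradj⟩ := exists_ray_in hlf (hw : w ∈ (Backbone G o)ᶜ) hinf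
  obtain ⟨f, hf0, hfinj, -, hfadj, k, hfk⟩ := hu
  have hback : ∀ i, f i ∈ Backbone G o := mem_backbone_of_ray hf0 hfinj hfadj
  have hcomp : ∀ n, r n ∉ Backbone G o := fun n => (hrmem n).1
  classical
  set g : ℕ → V := fun i => if i ≤ k then f i else r (i - (k + 1)) with hg
  apply hw
  have hval1 : ∀ i, i ≤ k → g i = f i := by intro i h; simp [hg, h]
  have hval2 : ∀ i, ¬ i ≤ k → g i = r (i - (k + 1)) := by intro i h; simp [hg, h]
  refine ⟨g, ?_, ?_, fun _ => trivial, ?_, k + 1, ?_⟩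
  · rw [hval1 0 (Nat.zero_le k)]; exact hf0
  · intro a b hab
    by_cases ha : a ≤ k <;> by_cases hb : b ≤ k
    · rw [hval1 a ha, hval1 b hb] at hab; exact hfinj hab
    · rw [hval1 a ha, hval2 b hb] at hab
      exact absurd (hab ▸ hback a) (hcomp _)
    · rw [hval2 a ha, hval1 b hb] at hab
      exact absurd (hab.symm ▸ hback b) (hcomp _)
    · rw [hval2 a ha, hval2 b hb] at hab
      have := hrinj hab; omega
  · intro n
    rcases Nat.lt_or_ge n k with h | h
    · rw [hval1 n h.le, hval1 (n + 1) h]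
      exact hfadj n
    · rcases Nat.eq_or_lt_of_le h with h | h
      · have h3 : n + 1 - (k + 1) = 0 := by omega
        rw [hval1 n h.ge, hval2 (n + 1) (by omega), h3, hr0]
        rw [h] at hfk
        rw [hfk]
        exact huw
      · have h3 : n + 1 - (k + 1) = (n - (k + 1)) + 1 := by omega
        rw [hval2 n (by omega), hval2 (n + 1) (by omega), h3]
        exact hradj (n - (k + 1))
  · have h3 : k + 1 - (k + 1) = 0 := by omega
    rw [hval2 (k + 1) (by omega), h3, hr0]

lemma attach_eq (hT : G.IsTree) {o uj w a b : V} (hujb : uj ∈ Backbone G o)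
    (hw : w ∉ Backbone G o)
    (hujw : G.Adj uj w) (ha : a ∈ componentIn G (Backbone G o)ᶜ w)
    (hb : b ∈ Backbone G o) (hab : G.Adj a b) : b = uj := by
  classical
  by_contra hne
  obtain ⟨p, hp⟩ := exists_walk_of_reachableWithin ha.2 (hw : w ∈ (Backbone G o)ᶜ)
  set p' := p.bypass with hp'def
  have hp' : ∀ v ∈ p'.support, v ∉ Backbone G o :=
    fun v hv => hp v (SimpleGraph.Walk.support_bypass_subset p hv)
  have hbp' : b ∉ p'.support := fun h => hp' b h hb
  have hujp' : uj ∉ p'.support := fun h => hp' uj h hujb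
  have hwp' : w ∈ p'.support := p'.start_mem_support
  set path1 : G.Walk uj b := SimpleGraph.Walk.cons hujw (p'.concat hab) with hpath1def
  have hpath1 : path1.IsPath := by
    rw [hpath1def, SimpleGraph.Walk.cons_isPath_iff]
    constructor
    · rw [← SimpleGraph.Walk.isPath_reverse_iff, SimpleGraph.Walk.reverse_concat,
        SimpleGraph.Walk.cons_isPath_iff]
      refine ⟨(SimpleGraph.Walk.isPath_reverse_iff p').mpr (SimpleGraph.Walk.bypass_isPath p), ?_⟩
      rw [SimpleGraph.Walk.support_reverse, List.mem_reverse]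
      exact hbp'
    · rw [SimpleGraph.Walk.support_concat, List.mem_append]
      rintro (h | h)
      · exact hujp' h
      · simp only [List.mem_singleton] at h; exact hne h.symm
  have hreach : ReachableWithin G (Backbone G o) uj b :=
    (reachableWithin_symm (backbone_reachable hujb)).trans (backbone_reachable hb)
  obtain ⟨q, hq⟩ := exists_walk_of_reachableWithin hreach hujb
  have hequal : (⟨path1, hpath1⟩ : G.Path uj b) = q.toPath :=
    hT.IsAcyclic.path_unique _ _
  have hw1 : w ∈ path1.support := by
    rw [hpath1def, SimpleGraph.Walk.support_cons]
    right
    rw [SimpleGraph.Walk.support_concat]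
    exact List.mem_append.mpr (Or.inl hwp')
  have hwq : w ∈ (q.toPath : G.Walk uj b).support := by
    have := congrArg (fun P : G.Path uj b => (P : G.Walk uj b).support) hequal
    simp only at this
    rw [← this]
    exact hw1
  exact hw (hq w (SimpleGraph.Walk.support_toPath_subset q hwq))

end AuxLemmas

/-- A non-amenable bounded-degree infinite tree satisfies condition (C2)
for some constant `M`. -/
theorem statement2 {V : Type*} (G : SimpleGraph V) (o : V) (Δ : ℕ)
    (hT : G.IsTree) (hinf : Infinite V)
    (hdeg : ∀ v : V, (G.neighborSet v).Finite ∧ (G.neighborSet v).ncard ≤ Δ)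
    (hNA : NonAmenable G) :
    ∃ M : ℕ, CondC2 G o M := by
  classical
  obtain ⟨c, hc, hNA'⟩ := hNA
  refine ⟨⌈2 / c⌉₊ + 2, ?_⟩
  rintro ⟨u, hub, huadj, huinj, hudeg⟩
  set M : ℕ := ⌈2 / c⌉₊ + 2 with hM
  have hlf : ∀ v : V, (G.neighborSet v).Finite := fun v => (hdeg v).1
  have hM2 : 2 ≤ M := by omega
  -- the two backbone-neighbours of an interior path vertex are its path neighbours
  have hnbhd : ∀ j, 1 ≤ j → j ≤ M - 1 →
      G.neighborSet (u j) ∩ Backbone G o = {u (j - 1), u (j + 1)} := by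
    intro j hj1 hj2
    have hadj1 : G.Adj (u (j - 1)) (u j) := by
      have := huadj (j - 1) (by omega)
      rwa [show j - 1 + 1 = j by omega] at this
    have hadj2 : G.Adj (u j) (u (j + 1)) := huadj j (by omega)
    have hmem1 : u (j - 1) ∈ G.neighborSet (u j) ∩ Backbone G o :=
      ⟨hadj1.symm, hub _ (by omega)⟩
    have hmem2 : u (j + 1) ∈ G.neighborSet (u j) ∩ Backbone G o :=
      ⟨hadj2, hub _ (by omega)⟩
    have hne12 : u (j - 1) ≠ u (j + 1) := by
      intro h; have := huinj _ _ (by omega) (by omega) h; omega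
    have hsub : ({u (j - 1), u (j + 1)} : Set V) ⊆ G.neighborSet (u j) ∩ Backbone G o := by
      rintro x (rfl | rfl)
      · exact hmem1
      · exact hmem2
    have hfin : (G.neighborSet (u j) ∩ Backbone G o).Finite := (hlf _).inter_of_left _
    have hcard : (G.neighborSet (u j) ∩ Backbone G o).ncard = 2 := hudeg j (by omega)
    exact (Set.eq_of_subset_of_ncard_le hsub
      (by rw [hcard, Set.ncard_pair hne12]) hfin).symm
  set S : Set V := ⋃ j ∈ Set.Icc 1 (M - 1),
    ({u j} ∪ ⋃ w ∈ G.neighborSet (u j) \ Backbone G o,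
      componentIn G (Backbone G o)ᶜ w) with hS
  have hmemS : ∀ j, 1 ≤ j → j ≤ M - 1 → u j ∈ S := by
    intro j h1 h2
    exact Set.mem_biUnion (Set.mem_Icc.mpr ⟨h1, h2⟩) (Set.mem_union_left _ rfl)
  have hmemS2 : ∀ j, 1 ≤ j → j ≤ M - 1 →
      ∀ w ∈ G.neighborSet (u j) \ Backbone G o,
      ∀ x ∈ componentIn G (Backbone G o)ᶜ w, x ∈ S := by
    intro j h1 h2 w hw x hx
    exact Set.mem_biUnion (Set.mem_Icc.mpr ⟨h1, h2⟩)
      (Set.mem_union_right _ (Set.mem_biUnion hw hx))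
  have hSfin : S.Finite := by
    apply Set.Finite.biUnion (Set.finite_Icc 1 (M - 1))
    intro j hj
    apply (Set.finite_singleton (u j)).union
    apply Set.Finite.biUnion ((hlf (u j)).subset Set.diff_subset)
    intro w hw
    exact component_finite hT hlf (hub j (by have := (Set.mem_Icc.mp hj).2; omega))
      hw.1 hw.2
  have hcard_low : M - 1 ≤ S.ncard := by
    have himg : u '' Set.Icc 1 (M - 1) ⊆ S := by
      rintro x ⟨j, hj, rfl⟩
      exact hmemS j (Set.mem_Icc.mp hj).1 (Set.mem_Icc.mp hj).2
    have hinj' : Set.InjOn u (Set.Icc 1 (M - 1)) := by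
      intro x hx y hy h
      exact huinj x y (by have := (Set.mem_Icc.mp hx).2; omega)
        (by have := (Set.mem_Icc.mp hy).2; omega) h
    have h1 : (u '' Set.Icc 1 (M - 1)).ncard = M - 1 := by
      rw [Set.ncard_image_of_injOn hinj',
        show (Set.Icc 1 (M - 1)) = ↑(Finset.Icc 1 (M - 1)) by simp,
        Set.ncard_coe_finset, Nat.card_Icc]
      omega
    calc M - 1 = (u '' Set.Icc 1 (M - 1)).ncard := h1.symm
    _ ≤ S.ncard := Set.ncard_le_ncard himg hSfin
  have hbdry : edgeBdry G S ⊆ {s(u 0, u 1), s(u (M - 1), u M)} := by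
    rintro e ⟨a, b, hadj, rfl, haS, hbS⟩
    rw [hS] at haS
    obtain ⟨j, hj, hcase⟩ := Set.mem_iUnion₂.mp haS
    obtain ⟨hj1, hj2⟩ := Set.mem_Icc.mp hj
    rcases hcase with hcase | hcase
    · rw [Set.mem_singleton_iff] at hcase
      subst hcase
      by_cases hbB : b ∈ Backbone G o
      · have hbmem : b ∈ G.neighborSet (u j) ∩ Backbone G o := ⟨hadj, hbB⟩
        rw [hnbhd j hj1 hj2] at hbmem
        rcases hbmem with h | h
        · by_cases hj1' : 2 ≤ j
          · rw [h] at hbS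
            exact absurd (hmemS (j - 1) (by omega) (by omega)) hbS
          · have hj0 : j = 1 := by omega
            left
            rw [h, hj0]
            norm_num [Sym2.eq_swap]
        · rw [Set.mem_singleton_iff] at h
          by_cases hj2' : j + 1 ≤ M - 1
          · rw [h] at hbS
            exact absurd (hmemS (j + 1) (by omega) (by omega)) hbS
          · have hjM : j = M - 1 := by omega
            right
            rw [h, hjM, show M - 1 + 1 = M by omega]
            exact rfl
      · have hbc : b ∈ componentIn G (Backbone G o)ᶜ b := mem_componentIn_self hbB
        exact absurd (hmemS2 j hj1 hj2 b ⟨hadj, hbB⟩ b hbc) hbS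
    · obtain ⟨w, hwmem, hacomp⟩ := Set.mem_iUnion₂.mp hcase
      by_cases hbB : b ∈ Backbone G o
      · have hbj : b = u j :=
          attach_eq hT (hub j (by omega)) hwmem.2 hwmem.1 hacomp hbB hadj
        rw [hbj] at hbS
        exact absurd (hmemS j hj1 hj2) hbS
      · have hbc : b ∈ componentIn G (Backbone G o)ᶜ w :=
          ⟨hbB, hacomp.2.tail ⟨hadj, hacomp.1, hbB⟩⟩
        exact absurd (hmemS2 j hj1 hj2 w hwmem b hbc) hbS
  have hbdry2 : (edgeBdry G S).ncard ≤ 2 := by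
    have h2 : ({s(u 0, u 1), s(u (M - 1), u M)} : Set (Sym2 V)).ncard ≤ 2 := by
      apply (Set.ncard_insert_le _ _).trans
      simp
    exact (Set.ncard_le_ncard hbdry
      ((Set.finite_singleton _).insert _)).trans h2
  have hmain := hNA' S hSfin ⟨u 1, hmemS 1 le_rfl (by omega)⟩
  have h1 : c * ((M - 1 : ℕ) : ℝ) ≤ c * (S.ncard : ℝ) := by
    apply mul_le_mul_of_nonneg_left _ hc.le
    exact_mod_cast hcard_low
  have h3 : ((edgeBdry G S).ncard : ℝ) ≤ 2 := by exact_mod_cast hbdry2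
  have h4 : (2 : ℝ) < c * ((M - 1 : ℕ) : ℝ) := by
    have hlt : (2 / c : ℝ) < ((M - 1 : ℕ) : ℝ) := by
      have hle : (2 / c : ℝ) ≤ (⌈2 / c⌉₊ : ℝ) := Nat.le_ceil _
      have heq : ((M - 1 : ℕ) : ℝ) = (⌈2 / c⌉₊ : ℝ) + 1 := by
        rw [show M - 1 = ⌈2 / c⌉₊ + 1 by omega]
        push_cast
        ring
      rw [heq]
      linarith
    have := (div_lt_iff₀ hc).mp hlt
    linarith [this, mul_comm ((M - 1 : ℕ) : ℝ) c]
  linarith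
end

section
/- Let T = (V, E) be an infinite, locally finite tree with a distinguished root vertex o, and let L ≥ 1 be an integer. Suppose T satisfies condition (C1) with constant L and condition (C2) with constant L. Then for every finite nonempty set K ⊆ V that is connected in T, one has 9L² · |∂K| ≥ |K|_D, where |K|_D is the sum over v ∈ K of the degree of v in T. Equivalently, the edge-expansion constant Φ_E(T) := inf{|∂K| / |K|_D : K ⊆ V finite, nonempty, connected} satisfies Φ_E(T) ≥ 1/(9L²). -/
open SimpleGraph

variable {V : Type*}

section aux



section basic
variable {G : SimpleGraph V} {s t : Set V} {a b : V}

lemma ReachableWithin.symm (h : ReachableWithin G s a b) : ReachableWithin G s b a := by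
  induction h with
  | refl => exact .refl
  | tail h1 h2 ih => exact Relation.ReflTransGen.head ⟨h2.1.symm, h2.2.2, h2.2.1⟩ ih

lemma ReachableWithin.mono (hst : s ⊆ t) (h : ReachableWithin G s a b) :
    ReachableWithin G t a b := by
  induction h with
  | refl => exact .refl
  | tail h1 h2 ih => exact ih.tail ⟨h2.1, hst h2.2.1, hst h2.2.2⟩

lemma ReachableWithin.mem_right (hmem : a ∈ s) (h : ReachableWithin G s a b) : b ∈ s := by
  induction h with
  | refl => exact hmem
  | tail h1 h2 ih => exact h2.2.2

lemma ReachableWithin.exists_walk (h : ReachableWithin G s a b) (ha : a ∈ s) :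
    ∃ p : G.Walk a b, ∀ x ∈ p.support, x ∈ s := by
  induction h with
  | refl => exact ⟨.nil, by simp [ha]⟩
  | tail h1 h2 ih =>
    obtain ⟨p, hp⟩ := ih
    refine ⟨p.concat h2.1, ?_⟩
    intro x hx
    rw [SimpleGraph.Walk.support_concat] at hx
    rcases List.mem_append.1 hx with hx | hx
    · exact hp x hx
    · rw [List.mem_singleton] at hx; subst hx; exact h2.2.2

lemma reachableWithin_of_walk (p : G.Walk a b) (hp : ∀ x ∈ p.support, x ∈ s) :
    ReachableWithin G s a b := by
  induction p with
  | nil => exact .refl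
  | @cons u v w h q ih =>
    refine Relation.ReflTransGen.head ⟨h, ?_, ?_⟩ (ih ?_)
    · exact hp u (by simp)
    · exact hp v (by simp [SimpleGraph.Walk.support_cons, q.start_mem_support])
    · intro x hx; exact hp x (by simp [SimpleGraph.Walk.support_cons, hx])

lemma path_support_subset_walk (hac : G.IsAcyclic) (q : G.Walk a b) (hq : q.IsPath)
    (p : G.Walk a b) : ∀ x ∈ q.support, x ∈ p.support := by
  classical
  have h := hac.path_unique ⟨q, hq⟩ p.toPath
  have h2 := congrArg (fun r : G.Path a b => (r : G.Walk a b).support) h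
  simp only at h2
  intro x hx
  rw [h2] at hx
  exact SimpleGraph.Walk.support_toPath_subset p hx

lemma reachable_induce_of_walk {u w : V} (p : G.Walk u w) :
    ∀ (hu : u ∈ s) (hw : w ∈ s), (∀ x ∈ p.support, x ∈ s) →
      (G.induce s).Reachable ⟨u, hu⟩ ⟨w, hw⟩ := by
  induction p with
  | nil => intro hu hw _; rfl
  | @cons u' v' w' h q ih =>
    intro hu hw hsup
    have hv' : v' ∈ s := hsup v' (by simp [SimpleGraph.Walk.support_cons, q.start_mem_support])
    have hadj : (G.induce s).Adj ⟨u', hu⟩ ⟨v', hv'⟩ := h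
    refine hadj.reachable.trans (ih hv' hw ?_)
    intro x hx; exact hsup x (by simp [SimpleGraph.Walk.support_cons, hx])

end basic

section core
variable {G : SimpleGraph V}

lemma core_handshake (hac : G.IsAcyclic) (A : Finset V) (hA : A.Nonempty)
    (hconn : ∀ a ∈ A, ∀ b ∈ A, ReachableWithin G (↑A) a b) :
    ∑ v ∈ A, (G.neighborSet v ∩ ↑A).ncard = 2 * (A.card - 1) := by
  classical
  letI : Fintype ↥(↑A : Set V) := FinsetCoe.fintype A
  set H : SimpleGraph ↥(↑A : Set V) := G.induce ↑A with hH
  letI : DecidableRel H.Adj := Classical.decRel _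
  have hHconn : H.Connected := by
    rw [SimpleGraph.connected_iff]
    refine ⟨fun x y => ?_, ⟨⟨hA.choose, hA.choose_spec⟩⟩⟩
    have h := hconn x x.2 y y.2
    obtain ⟨p, hp⟩ := h.exists_walk x.2
    exact reachable_induce_of_walk p x.2 y.2 hp
  have hHac : H.IsAcyclic := by
    intro v c hc
    have hinj : Function.Injective (SimpleGraph.Embedding.induce (G := G) (↑A : Set V)) :=
      Subtype.val_injective
    have := (SimpleGraph.Walk.map_isCycle_iff_of_injective
      (p := c) (f := (SimpleGraph.Embedding.induce (G := G) (↑A : Set V)).toHom) hinj).2 hc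
    exact hac _ this
  have hHtree : H.IsTree := ⟨hHconn, hHac⟩
  have hcard : Fintype.card ↥(↑A : Set V) = A.card := by
    rw [← Nat.card_eq_fintype_card, Nat.card_coe_set_eq, Set.ncard_coe_finset]
  have hedges : H.edgeFinset.card + 1 = A.card := by
    rw [← hcard]; exact hHtree.card_edgeFinset
  have hdeg : ∀ v : ↥(↑A : Set V), H.degree v = (G.neighborSet ↑v ∩ ↑A).ncard := by
    intro v
    have himg : Subtype.val '' (H.neighborSet v) = G.neighborSet ↑v ∩ ↑A := by
      ext x
      simp only [Set.mem_image, SimpleGraph.mem_neighborSet, Set.mem_inter_iff]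
      constructor
      · rintro ⟨y, hy, rfl⟩; exact ⟨hy, y.2⟩
      · rintro ⟨hadj, hx⟩; exact ⟨⟨x, hx⟩, hadj, rfl⟩
    rw [← himg, Set.ncard_image_of_injective _ Subtype.val_injective,
      ← SimpleGraph.card_neighborSet_eq_degree, ← Nat.card_coe_set_eq,
      Nat.card_eq_fintype_card]
  have hsum : ∑ v ∈ A, (G.neighborSet v ∩ ↑A).ncard = ∑ v : ↥(↑A : Set V), H.degree v := by
    rw [← Finset.sum_coe_sort A (fun v => (G.neighborSet v ∩ ↑A).ncard)]
    exact Finset.sum_congr rfl (fun v _ => (hdeg v).symm)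
  rw [hsum, SimpleGraph.sum_degrees_eq_twice_card_edges]
  omega

end core

section boundary
variable {G : SimpleGraph V} {K : Finset V}

lemma edgeBdry_ncard_eq (hlf : ∀ v : V, (G.neighborSet v).Finite) (K : Finset V) :
    (edgeBdry G ↑K).ncard = ∑ v ∈ K, (G.neighborSet v \ ↑K).ncard ∧ (edgeBdry G ↑K).Finite := by
  classical
  have hofin : ∀ a : V, (G.neighborSet a \ ↑K).Finite := fun a => (hlf a).subset Set.diff_subset
  set out : V → Finset V := fun a => (hofin a).toFinset with hout
  set P : Finset (V × V) := K.biUnion (fun a => (out a).image (fun b => (a, b))) with hP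
  have hmemP : ∀ q : V × V, q ∈ P ↔ q.1 ∈ K ∧ G.Adj q.1 q.2 ∧ q.2 ∉ K := by
    intro q
    simp only [hP, Finset.mem_biUnion, Finset.mem_image]
    constructor
    · rintro ⟨a, ha, b, hb, rfl⟩
      simp only [hout, Set.Finite.mem_toFinset, Set.mem_diff, SimpleGraph.mem_neighborSet,
        Finset.mem_coe] at hb
      exact ⟨ha, hb.1, hb.2⟩
    · rintro ⟨h1, h2, h3⟩
      exact ⟨q.1, h1, q.2, by
        simp only [hout, Set.Finite.mem_toFinset, Set.mem_diff, SimpleGraph.mem_neighborSet,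
          Finset.mem_coe]; exact ⟨h2, h3⟩, rfl⟩
  have himg : edgeBdry G ↑K = ↑(P.image (fun q => s(q.1, q.2))) := by
    ext e
    simp only [edgeBdry, Set.mem_setOf_eq, Finset.coe_image, Set.mem_image, Finset.mem_coe]
    constructor
    · rintro ⟨a, b, h1, rfl, h2, h3⟩
      exact ⟨(a, b), (hmemP (a, b)).2 ⟨h2, h1, fun hc => h3 hc⟩, rfl⟩
    · rintro ⟨q, hq, rfl⟩
      obtain ⟨h1, h2, h3⟩ := (hmemP q).1 hq
      exact ⟨q.1, q.2, h2, rfl, h1, fun hc => h3 hc⟩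
  have hinj : Set.InjOn (fun q : V × V => s(q.1, q.2)) ↑P := by
    rintro ⟨a, b⟩ ha ⟨c, d⟩ hc h
    obtain ⟨ha1, _, ha3⟩ := (hmemP _).1 (Finset.mem_coe.1 ha)
    obtain ⟨hc1, _, hc3⟩ := (hmemP _).1 (Finset.mem_coe.1 hc)
    simp only at h
    rcases Sym2.eq_iff.1 h with ⟨rfl, rfl⟩ | ⟨rfl, rfl⟩
    · rfl
    · exact absurd ha1 hc3
  constructor
  · rw [himg, Set.ncard_coe_finset, Finset.card_image_of_injOn hinj, hP,
      Finset.card_biUnion]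
    · refine Finset.sum_congr rfl (fun a _ => ?_)
      rw [Finset.card_image_of_injective _ (fun x y h => by simpa using h)]
      rw [Set.ncard_eq_toFinset_card _ (hofin a)]
    · intro x hx y hy hxy
      simp only [Finset.disjoint_left]
      rintro ⟨a, b⟩ ha hb
      simp only [Finset.mem_image] at ha hb
      obtain ⟨_, _, h1⟩ := ha
      obtain ⟨_, _, h2⟩ := hb
      obtain ⟨rfl, rfl⟩ := Prod.mk.inj h1
      obtain ⟨rfl, rfl⟩ := Prod.mk.inj h2
      exact hxy rfl
  · rw [himg]; exact (P.image _).finite_toSet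

lemma edgeBdry_nonempty (hconn : G.Connected) (hK : K.Nonempty) (hV : Infinite V) :
    (edgeBdry G (↑K : Set V)).Nonempty := by
  classical
  obtain ⟨a, ha⟩ := hK
  obtain ⟨x, hx⟩ := Infinite.exists_notMem_finset K
  obtain ⟨p⟩ := hconn.preconnected a x
  have key : ∀ (u w : V) (p : G.Walk u w), u ∈ K → w ∉ K →
      (edgeBdry G (↑K : Set V)).Nonempty := by
    intro u w p
    induction p with
    | nil => intro h1 h2; exact absurd h1 h2
    | @cons u' v' w' h q ih =>
      intro h1 h2
      by_cases hv' : v' ∈ K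
      · exact ih hv' h2
      · exact ⟨s(u', v'), u', v', h, rfl, h1, fun hc => hv' hc⟩
  exact key a x p ha hx

lemma one_le_bdry (hlf : ∀ v : V, (G.neighborSet v).Finite) (hconn : G.Connected)
    (hK : K.Nonempty) (hV : Infinite V) : 1 ≤ (edgeBdry G (↑K : Set V)).ncard := by
  have h := edgeBdry_ncard_eq (G := G) hlf K
  have hne := edgeBdry_nonempty hconn hK hV
  exact (Set.ncard_pos h.2).2 hne

lemma degSumF_eq (hac : G.IsAcyclic) (hlf : ∀ v : V, (G.neighborSet v).Finite)
    (hK : K.Nonempty) (hconn : ∀ a ∈ K, ∀ b ∈ K, ReachableWithin G (↑K) a b) :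
    degSumF G K + 2 = 2 * K.card + ∑ v ∈ K, (G.neighborSet v \ ↑K).ncard := by
  classical
  have hsplit : ∀ v ∈ K, (G.neighborSet v).ncard
      = (G.neighborSet v ∩ ↑K).ncard + (G.neighborSet v \ ↑K).ncard := by
    intro v _
    rw [← Set.ncard_inter_add_ncard_diff_eq_ncard (G.neighborSet v) ↑K (hlf v)]
  have : degSumF G K = ∑ v ∈ K, (G.neighborSet v ∩ ↑K).ncard
      + ∑ v ∈ K, (G.neighborSet v \ ↑K).ncard := by
    rw [degSumF, Finset.sum_congr rfl hsplit, Finset.sum_add_distrib]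
  rw [this, core_handshake hac K hK hconn]
  have := hK.card_pos
  omega

end boundary

section backbone

variable {G : SimpleGraph V} {o : V}

/-- Walk along a function with adjacent consecutive values. -/
def walkOfFn (G : SimpleGraph V) (f : ℕ → V) (hadj : ∀ n, G.Adj (f n) (f (n + 1))) :
    (k : ℕ) → G.Walk (f 0) (f k)
  | 0 => .nil
  | (k + 1) => (walkOfFn G f hadj k).concat (hadj k)

lemma mem_support_walkOfFn_iff {f : ℕ → V} {hadj : ∀ n, G.Adj (f n) (f (n + 1))} {k : ℕ}
    {x : V} : x ∈ (walkOfFn G f hadj k).support ↔ ∃ i ≤ k, f i = x := by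
  induction k with
  | zero =>
    simp only [walkOfFn, SimpleGraph.Walk.support_nil, List.mem_singleton]
    constructor
    · rintro rfl; exact ⟨0, le_refl 0, rfl⟩
    · rintro ⟨i, hi, rfl⟩; rw [Nat.le_zero.1 hi]
  | succ k ih =>
    simp only [walkOfFn, SimpleGraph.Walk.support_concat, List.concat_eq_append,
      List.mem_append, List.mem_singleton]
    constructor
    · rintro (hx | rfl)
      · obtain ⟨i, hi, rfl⟩ := ih.1 hx
        exact ⟨i, le_trans hi (Nat.le_succ k), rfl⟩
      · exact ⟨k + 1, le_refl _, rfl⟩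
    · rintro ⟨i, hi, rfl⟩
      rcases Nat.lt_or_ge i (k + 1) with h | h
      · exact Or.inl (ih.2 ⟨i, Nat.lt_succ_iff.1 h, rfl⟩)
      · exact Or.inr (by rw [le_antisymm hi h])

lemma isPath_walkOfFn {f : ℕ → V} (hinj : Function.Injective f)
    (hadj : ∀ n, G.Adj (f n) (f (n + 1))) (k : ℕ) : (walkOfFn G f hadj k).IsPath := by
  induction k with
  | zero => simp [walkOfFn]
  | succ k ih =>
    have hnm : f (k + 1) ∉ (walkOfFn G f hadj k).support := by
      intro hc
      obtain ⟨i, hi, hfi⟩ := mem_support_walkOfFn_iff.1 hc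
      have := hinj hfi
      omega
    rw [SimpleGraph.Walk.isPath_def] at ih ⊢
    show ((walkOfFn G f hadj k).concat (hadj k)).support.Nodup
    rw [SimpleGraph.Walk.support_concat, List.nodup_append]
    refine ⟨ih, List.nodup_singleton _, ?_⟩
    intro a ha b hb
    rw [List.mem_singleton] at hb
    subst hb
    exact fun h => hnm (h ▸ ha)

lemma mem_backbone_of_fn {f : ℕ → V} (hf0 : f 0 = o) (hinj : Function.Injective f)
    (hadj : ∀ n, G.Adj (f n) (f (n + 1))) (i : ℕ) : f i ∈ Backbone G o :=
  ⟨f, hf0, hinj, fun _ => Set.mem_univ _, hadj, i, rfl⟩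

/-- There is a path from `o` to any backbone vertex, with support inside the backbone. -/
lemma backbone_exists_path (hv : v ∈ Backbone G o) :
    ∃ p : G.Walk o v, p.IsPath ∧ ∀ x ∈ p.support, x ∈ Backbone G o := by
  obtain ⟨f, hf0, hinj, _, hadj, k, hfk⟩ := hv
  refine ⟨(walkOfFn G f hadj k).copy hf0 hfk, ?_, ?_⟩
  · rw [SimpleGraph.Walk.isPath_copy]
    exact isPath_walkOfFn hinj hadj k
  · intro x hx
    rw [SimpleGraph.Walk.support_copy] at hx
    obtain ⟨i, _, rfl⟩ := mem_support_walkOfFn_iff.1 hx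
    exact mem_backbone_of_fn hf0 hinj hadj i

/-- Backbone is path-closed: any path between backbone vertices stays in the backbone. -/
lemma backbone_path_closed (hac : G.IsAcyclic) {a b : V} (ha : a ∈ Backbone G o)
    (hb : b ∈ Backbone G o) (q : G.Walk a b) (hq : q.IsPath) :
    ∀ x ∈ q.support, x ∈ Backbone G o := by
  obtain ⟨pa, _, hpa⟩ := backbone_exists_path ha
  obtain ⟨pb, _, hpb⟩ := backbone_exists_path hb
  have hw : ∀ x ∈ (pa.reverse.append pb).support, x ∈ Backbone G o := by
    intro x hx
    rw [SimpleGraph.Walk.mem_support_append_iff] at hx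
    rcases hx with hx | hx
    · exact hpa x (by rwa [SimpleGraph.Walk.support_reverse, List.mem_reverse] at hx)
    · exact hpb x hx
  intro x hx
  exact hw x (path_support_subset_walk hac q hq _ x hx)

lemma two_le_degIn_backbone (hlf : ∀ v : V, (G.neighborSet v).Finite) {v : V}
    (hv : v ∈ Backbone G o) (hvo : v ≠ o) : 2 ≤ degIn G (Backbone G o) v := by
  obtain ⟨f, hf0, hinj, _, hadj, k, hfk⟩ := hv
  have hk : k ≠ 0 := by rintro rfl; rw [hf0] at hfk; exact hvo hfk.symm
  obtain ⟨k, rfl⟩ : ∃ k', k = k' + 1 := ⟨k - 1, by omega⟩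
  have h1 : f k ∈ G.neighborSet v ∩ Backbone G o := by
    refine ⟨?_, mem_backbone_of_fn hf0 hinj hadj k⟩
    rw [← hfk]; exact (hadj k).symm
  have h2 : f (k + 2) ∈ G.neighborSet v ∩ Backbone G o := by
    refine ⟨?_, mem_backbone_of_fn hf0 hinj hadj (k + 2)⟩
    rw [← hfk]; exact hadj (k + 1)
  have hne : f k ≠ f (k + 2) := fun h => by have := hinj h; omega
  have hfin : (G.neighborSet v ∩ Backbone G o).Finite := (hlf v).subset Set.inter_subset_left
  rw [degIn]
  rw [Nat.succ_le_iff]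
  exact (Set.one_lt_ncard_iff hfin).2 ⟨f k, f (k + 2), h1, h2, hne⟩

lemma one_le_degIn_backbone_root (hlf : ∀ v : V, (G.neighborSet v).Finite)
    (ho : o ∈ Backbone G o) : 1 ≤ degIn G (Backbone G o) o := by
  obtain ⟨f, hf0, hinj, _, hadj, k, hfk⟩ := ho
  have hfin : (G.neighborSet o ∩ Backbone G o).Finite := (hlf o).subset Set.inter_subset_left
  rw [degIn, Nat.succ_le_iff, Set.ncard_pos hfin]
  rcases Nat.eq_zero_or_pos k with rfl | hk
  · exact ⟨f 1, by rw [← hfk]; exact hadj 0, mem_backbone_of_fn hf0 hinj hadj 1⟩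
  · refine ⟨f (k - 1), ?_, mem_backbone_of_fn hf0 hinj hadj (k - 1)⟩
    have := hadj (k - 1)
    rw [Nat.sub_add_cancel hk, hfk] at this
    rw [SimpleGraph.mem_neighborSet]
    exact this.symm

end backbone

section koenig
variable {G : SimpleGraph V} {s : Set V} {o : V}

lemma componentIn_step [DecidableEq V] {x w : V} {F : Finset V}
    (h : ReachableWithin G (s \ ↑F) x w) (hw : w ≠ x) :
    ∃ y, G.Adj x y ∧ y ∈ s \ ↑(insert x F) ∧
      ReachableWithin G (s \ ↑(insert x F)) y w := by
  classical
  induction h with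
  | refl => exact absurd rfl hw
  | @tail w' w h1 h2 ih =>
    by_cases hw' : w' = x
    · subst hw'
      refine ⟨w, h2.1, ⟨h2.2.2.1, ?_⟩, .refl⟩
      simp only [Finset.coe_insert, Set.mem_insert_iff, Finset.mem_coe]
      push_neg
      exact ⟨hw, fun hc => h2.2.2.2 (Finset.mem_coe.2 hc)⟩
    · obtain ⟨y, hy1, hy2, hy3⟩ := ih hw'
      refine ⟨y, hy1, hy2, hy3.tail ⟨h2.1, ?_, ?_⟩⟩
      · simp only [Finset.coe_insert, Set.mem_diff, Set.mem_insert_iff, Finset.mem_coe]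
        push_neg
        exact ⟨h2.2.1.1, hw', fun hc => h2.2.1.2 hc⟩
      · simp only [Finset.coe_insert, Set.mem_diff, Set.mem_insert_iff, Finset.mem_coe]
        push_neg
        exact ⟨h2.2.2.1, hw, fun hc => h2.2.2.2 hc⟩

lemma koenig_step [DecidableEq V] (hlf : ∀ v : V, (G.neighborSet v).Finite) {x : V} {F : Finset V}
    (hx : x ∈ s \ ↑F) (hinf : (componentIn G (s \ ↑F) x).Infinite) :
    ∃ y, G.Adj x y ∧ y ∈ s \ ↑(insert x F) ∧
      (componentIn G (s \ ↑(insert x F)) y).Infinite := by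
  classical
  by_contra hcon
  push_neg at hcon
  have hsub : componentIn G (s \ ↑F) x \ {x} ⊆
      ⋃ y ∈ {y | G.Adj x y ∧ y ∈ s \ ↑(insert x F)},
        componentIn G (s \ ↑(insert x F)) y := by
    rintro w ⟨⟨hws, hreach⟩, hwx⟩
    obtain ⟨y, hy1, hy2, hy3⟩ := componentIn_step hreach (by simpa using hwx)
    refine Set.mem_biUnion (show y ∈ _ from ⟨hy1, hy2⟩) ?_
    exact ⟨hy3.mem_right hy2, hy3⟩
  have hidx : {y | G.Adj x y ∧ y ∈ s \ ↑(insert x F)}.Finite :=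
    (hlf x).subset (fun y hy => hy.1)
  have hfin : (⋃ y ∈ {y | G.Adj x y ∧ y ∈ s \ ↑(insert x F)},
      componentIn G (s \ ↑(insert x F)) y).Finite := by
    refine Set.Finite.biUnion hidx ?_
    intro y hy
    have h := hcon y hy.1 hy.2
    exact h
  have : (componentIn G (s \ ↑F) x \ {x}).Finite := hfin.subset hsub
  have : (componentIn G (s \ ↑F) x).Finite := by
    have := this.union (Set.finite_singleton x)
    refine this.subset ?_
    intro w hw
    by_cases hwx : w = x
    · exact Or.inr (by simp [hwx])
    · exact Or.inl ⟨hw, by simp [hwx]⟩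
  exact hinf this

lemma exists_ray_of_infinite_componentIn (hlf : ∀ v : V, (G.neighborSet v).Finite) {u : V}
    (hinf : (componentIn G s u).Infinite) :
    ∃ r : ℕ → V, r 0 = u ∧ Function.Injective r ∧ (∀ n, r n ∈ s) ∧
      ∀ n, G.Adj (r n) (r (n + 1)) := by
  classical
  have heq_left : ∀ a b : V, ReachableWithin G s a b → a ∉ s → b = a := by
    intro a b h ha
    induction h with
    | refl => rfl
    | tail h1 h2 ih => exact absurd (ih ▸ h2.2.1 : a ∈ s) ha
  have hu : u ∈ s := by
    by_contra hu
    refine hinf ((Set.finite_singleton u).subset ?_)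
    rintro w ⟨hws, hreach⟩
    exact heq_left u w hreach hu
  -- the type of "states"
  let Q := {q : V × Finset V // q.1 ∈ s \ ↑q.2 ∧ (componentIn G (s \ ↑q.2) q.1).Infinite}
  let q0 : Q := ⟨(u, ∅), by simpa using hu, by simpa using hinf⟩
  have stepFn : ∀ q : Q, {q' : Q // G.Adj q.val.1 q'.val.1 ∧
      q'.val.2 = insert q.val.1 q.val.2} := by
    intro q
    have := koenig_step (s := s) hlf q.2.1 q.2.2
    let y := this.choose
    obtain ⟨h1, h2, h3⟩ := this.choose_spec
    exact ⟨⟨(y, insert q.val.1 q.val.2), h2, h3⟩, h1, rfl⟩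
  let g : ℕ → Q := fun n => Nat.rec q0 (fun _ q => (stepFn q).val) n
  have hgsucc : ∀ n, g (n + 1) = (stepFn (g n)).val := fun n => rfl
  refine ⟨fun n => (g n).val.1, rfl, ?_, ?_, ?_⟩
  · -- injectivity via the accumulated finsets
    have hmem : ∀ n m, m < n → (g m).val.1 ∈ (g n).val.2 := by
      intro n
      induction n with
      | zero => omega
      | succ n ih =>
        intro m hm
        rw [hgsucc n, (stepFn (g n)).2.2]
        rcases Nat.lt_or_ge m n with h | h
        · exact Finset.mem_insert_of_mem (ih m h)
        · have : m = n := by omega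
          subst this
          exact Finset.mem_insert_self _ _
    have hnot : ∀ n, (g n).val.1 ∉ (g n).val.2 := fun n => by
      have := (g n).2.1
      exact fun hc => this.2 (Finset.mem_coe.2 hc)
    intro a b hab
    have hab' : (g a).val.1 = (g b).val.1 := hab
    by_contra hne
    rcases Nat.lt_or_ge a b with h | h
    · exact hnot b (hab' ▸ hmem b a h)
    · have : b < a := by omega
      exact hnot a (hab'.symm ▸ hmem a b this)
  · intro n
    exact ((g n).2.1).1
  · intro n
    show G.Adj (g n).val.1 (g (n + 1)).val.1
    rw [hgsucc n]
    exact (stepFn (g n)).2.1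

end koenig

section splice
variable {G : SimpleGraph V} {o : V}

/-- From an injective ray anywhere in a connected acyclic graph, eventually the ray lies in
the backbone rooted at `o`. -/
lemma ray_eventually_backbone (hconn : G.Connected) (hac : G.IsAcyclic)
    (r : ℕ → V) (hinj : Function.Injective r) (hadj : ∀ n, G.Adj (r n) (r (n + 1))) :
    ∃ j : ℕ, ∀ n, j < n → r n ∈ Backbone G o := by
  classical
  obtain ⟨q0⟩ := hconn.preconnected o (r 0)
  let q : G.Walk o (r 0) := q0.toPath
  have hqpath : q.IsPath := q0.toPath.2
  have hIfin : {n : ℕ | r n ∈ q.support}.Finite := by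
    have : {n : ℕ | r n ∈ q.support} ⊆ r ⁻¹' {x | x ∈ q.support} := fun n hn => hn
    exact Set.Finite.subset (Set.Finite.preimage (hinj.injOn)
      (q.support.finite_toSet)) this
  have hI0 : 0 ∈ {n : ℕ | r n ∈ q.support} := q.end_mem_support
  obtain ⟨j, hjmem, hjmax⟩ := Set.Finite.exists_maximalFor id _ hIfin ⟨0, hI0⟩
  simp only [id] at hjmax
  have hjmem' : r j ∈ q.support := hjmem
  -- the spliced ray
  let q' : G.Walk o (r j) := q.takeUntil (r j) hjmem'
  have hq'path : q'.IsPath := hqpath.takeUntil hjmem'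
  have hq'sub : ∀ x ∈ q'.support, x ∈ q.support := fun x hx =>
    SimpleGraph.Walk.support_takeUntil_subset _ _ hx
  set l : List V := q'.support with hl
  have hlnd : l.Nodup := hq'path.support_nodup
  have hlne : l ≠ [] := q'.support_ne_nil
  have hlen : 0 < l.length := List.length_pos_iff.2 hlne
  have hhead : l.get ⟨0, hlen⟩ = o := by
    have h2 : l.head hlne = o := SimpleGraph.Walk.head_support q'
    rw [← h2, List.head_eq_getElem_zero hlne]
    rfl
  have hlast : l.get ⟨l.length - 1, by omega⟩ = r j := by
    rw [List.get_eq_getElem, ← List.getLast_eq_getElem hlne]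
    exact SimpleGraph.Walk.getLast_support q'
  have hchain : l.Chain' G.Adj := SimpleGraph.Walk.isChain_adj_support q'
  have hnotin : ∀ n, j < n → r n ∉ l := by
    intro n hn hc
    have : r n ∈ q.support := hq'sub _ hc
    have := hjmax this (by omega : j ≤ n)
    omega
  let c := l.length
  let g : ℕ → V := fun n => if h : n < c then l.get ⟨n, h⟩ else r (j + 1 + (n - c))
  have hg_lt : ∀ n (h : n < c), g n = l.get ⟨n, h⟩ := fun n h => dif_pos h
  have hg_ge : ∀ n, c ≤ n → g n = r (j + 1 + (n - c)) := fun n h => dif_neg (by omega)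
  have hg0 : g 0 = o := by rw [hg_lt 0 hlen, hhead]
  have hginj : Function.Injective g := by
    intro a b hab
    by_contra hne
    rcases Nat.lt_or_ge a c with ha | ha <;> rcases Nat.lt_or_ge b c with hb | hb
    · rw [hg_lt a ha, hg_lt b hb] at hab
      have := List.nodup_iff_injective_get.1 hlnd hab
      exact hne (by simpa using congrArg Fin.val this)
    · rw [hg_lt a ha, hg_ge b hb] at hab
      exact hnotin (j + 1 + (b - c)) (by omega) (hab ▸ List.get_mem l _)
    · rw [hg_ge a ha, hg_lt b hb] at hab
      exact hnotin (j + 1 + (a - c)) (by omega) (hab.symm ▸ List.get_mem l _)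
    · rw [hg_ge a ha, hg_ge b hb] at hab
      have := hinj hab
      omega
  have hgadj : ∀ n, G.Adj (g n) (g (n + 1)) := by
    intro n
    rcases Nat.lt_or_ge (n + 1) c with h1 | h1
    · rw [hg_lt n (by omega), hg_lt (n + 1) h1]
      exact List.isChain_iff_getElem.1 hchain n (by omega)
    · rcases Nat.lt_or_ge n c with h2 | h2
      · -- n = c - 1 : junction
        rw [hg_lt n h2, hg_ge (n + 1) h1]
        have h4 : j + 1 + (n + 1 - c) = j + 1 := by omega
        rw [h4]
        have hn' : n = l.length - 1 := by omega
        subst hn'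
        rw [hlast]
        exact hadj j
      · rw [hg_ge n h2, hg_ge (n + 1) (by omega)]
        have : j + 1 + (n + 1 - c) = (j + 1 + (n - c)) + 1 := by omega
        rw [this]
        exact hadj _
  refine ⟨j, fun n hn => ?_⟩
  have : r n = g (c + (n - j - 1)) := by
    rw [hg_ge _ (by omega)]
    congr 1
    omega
  rw [this]
  exact mem_backbone_of_fn hg0 hginj hgadj _

/-- Components of the complement of the backbone (plus one vertex) are finite. -/
lemma finite_componentIn_compl (hconn : G.Connected) (hac : G.IsAcyclic)
    (hlf : ∀ v : V, (G.neighborSet v).Finite) (v u : V) :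
    (componentIn G ((Backbone G o)ᶜ ∪ {v}) u).Finite := by
  by_contra hcon
  obtain ⟨r, hr0, hrinj, hrs, hradj⟩ := exists_ray_of_infinite_componentIn hlf hcon
  obtain ⟨j, hj⟩ := ray_eventually_backbone (o := o) hconn hac r hrinj hradj
  have h1 : r (j + 1) = v := by
    rcases hrs (j + 1) with h | h
    · exact absurd (hj (j + 1) (by omega)) h
    · exact h
  have h2 : r (j + 2) = v := by
    rcases hrs (j + 2) with h | h
    · exact absurd (hj (j + 2) (by omega)) h
    · exact h
  have := hrinj (h1.trans h2.symm)
  omega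

end splice

section cover
variable {G : SimpleGraph V} {o : V}

lemma cover_aux {K : Set V} {b : V} (hb : b ∈ Backbone G o) (hbK : b ∈ K) :
    ∀ {w}, ReachableWithin G K w b → w ∈ K → ∃ v, v ∈ K ∧ v ∈ Backbone G o ∧
      w ∈ (Backbone G o)ᶜ ∪ {v} ∧ ReachableWithin G ((Backbone G o)ᶜ ∪ {v}) v w := by
  intro w hreach
  induction hreach using Relation.ReflTransGen.head_induction_on with
  | refl =>
    intro hwK
    exact ⟨b, hbK, hb, Or.inr rfl, .refl⟩
  | head h' hrtg ih =>
    rename_i w' c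
    intro hwK
    by_cases hw : w' ∈ Backbone G o
    · exact ⟨w', hwK, hw, Or.inr rfl, .refl⟩
    · obtain ⟨v, hv1, hv2, hv3, hv4⟩ := ih h'.2.2
      refine ⟨v, hv1, hv2, Or.inl hw, hv4.tail ⟨h'.1.symm, hv3, Or.inl hw⟩⟩

lemma card_le_L_mul_B (hconn : G.Connected) (hac : G.IsAcyclic)
    (hlf : ∀ v : V, (G.neighborSet v).Finite) {L : ℕ} (hC1 : CondC1 G o L)
    (K : Finset V) (hKconn : ConnectedIn G ↑K) {b : V} (hbK : b ∈ K)
    (hb : b ∈ Backbone G o) [DecidablePred (· ∈ Backbone G o)] :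
    K.card ≤ L * (K.filter (· ∈ Backbone G o)).card := by
  classical
  set B := K.filter (· ∈ Backbone G o) with hB
  have hcompfin : ∀ v : V, (componentIn G ((Backbone G o)ᶜ ∪ {v}) v).Finite :=
    fun v => finite_componentIn_compl hconn hac hlf v v
  have hsub : K ⊆ B.biUnion (fun v => (hcompfin v).toFinset) := by
    intro w hw
    obtain ⟨v, hv1, hv2, hv3, hv4⟩ := cover_aux hb hbK
      (hKconn w (Finset.mem_coe.2 hw) b (Finset.mem_coe.2 hbK)) (Finset.mem_coe.2 hw)
    rw [Finset.mem_biUnion]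
    refine ⟨v, ?_, ?_⟩
    · rw [hB, Finset.mem_filter]; exact ⟨hv1, hv2⟩
    · rw [Set.Finite.mem_toFinset]
      exact ⟨hv3, hv4⟩
  calc K.card ≤ (B.biUnion (fun v => (hcompfin v).toFinset)).card :=
        Finset.card_le_card hsub
    _ ≤ ∑ v ∈ B, ((hcompfin v).toFinset).card := Finset.card_biUnion_le
    _ ≤ ∑ v ∈ B, L := by
        refine Finset.sum_le_sum (fun v hv => ?_)
        rw [← Set.ncard_eq_toFinset_card _ (hcompfin v)]
        exact hC1 v v (Or.inr rfl)
    _ = L * B.card := by rw [Finset.sum_const, smul_eq_mul, mul_comm]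

end cover

section ham
variable {G : SimpleGraph V}

lemma path_interior_two_nbrs {a b v : V} (p : G.Walk a b) (hp : p.IsPath)
    (hv : v ∈ p.support) (hva : v ≠ a) (hvb : v ≠ b) :
    ∃ x y, x ≠ y ∧ G.Adj v x ∧ G.Adj v y ∧ x ∈ p.support ∧ y ∈ p.support := by
  classical
  have hspec := p.take_spec hv
  set q1 := p.takeUntil v hv with hq1
  set q2 := p.dropUntil v hv with hq2
  have hnd : (q1.support ++ q2.support.tail).Nodup := by
    rw [← SimpleGraph.Walk.support_append, hspec]
    exact hp.support_nodup
  obtain ⟨x, hxadj, hxmem⟩ : ∃ x, G.Adj v x ∧ x ∈ q1.support := by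
    have hnn : ¬ q1.reverse.Nil := SimpleGraph.Walk.not_nil_of_ne hva
    obtain ⟨x', h, q, hq⟩ := SimpleGraph.Walk.not_nil_iff.1 hnn
    refine ⟨x', h, ?_⟩
    have : x' ∈ q1.reverse.support := by
      rw [hq]; simp [SimpleGraph.Walk.support_cons, q.start_mem_support]
    rwa [SimpleGraph.Walk.support_reverse, List.mem_reverse] at this
  obtain ⟨y, hyadj, hymem⟩ : ∃ y, G.Adj v y ∧ y ∈ q2.support.tail := by
    have hnn : ¬ q2.Nil := SimpleGraph.Walk.not_nil_of_ne hvb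
    obtain ⟨y', h, q, hq⟩ := SimpleGraph.Walk.not_nil_iff.1 hnn
    refine ⟨y', h, ?_⟩
    rw [hq]
    simp [SimpleGraph.Walk.support_cons, q.start_mem_support]
  have hxy : x ≠ y := by
    intro hc
    subst hc
    rw [List.nodup_append] at hnd
    exact hnd.2.2 _ hxmem _ hymem rfl
  refine ⟨x, y, hxy, hxadj, hyadj, ?_, ?_⟩
  · have : x ∈ q1.support ++ q2.support.tail := List.mem_append_left _ hxmem
    rwa [← SimpleGraph.Walk.support_append, hspec] at this
  · have : y ∈ q1.support ++ q2.support.tail := List.mem_append_right _ hymem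
    rwa [← SimpleGraph.Walk.support_append, hspec] at this

lemma three_le_ncard {s : Set V} (hs : s.Finite) {a b c : V} (ha : a ∈ s) (hb : b ∈ s)
    (hc : c ∈ s) (hab : a ≠ b) (hac : a ≠ c) (hbc : b ≠ c) : 3 ≤ s.ncard := by
  have h1 : ({a, b, c} : Set V).ncard = 3 := by
    rw [Set.ncard_eq_three]
    exact ⟨a, b, c, hab, hac, hbc, rfl⟩
  rw [← h1]
  refine Set.ncard_le_ncard ?_ hs
  intro x hx
  rcases hx with rfl | rfl | rfl
  · exact ha
  · exact hb
  · exact hc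

lemma two_le_ncard {s : Set V} (hs : s.Finite) {a b : V} (ha : a ∈ s) (hb : b ∈ s)
    (hab : a ≠ b) : 2 ≤ s.ncard := by
  rw [Nat.succ_le_iff]
  exact (Set.one_lt_ncard_iff hs).2 ⟨a, b, ha, hb, hab⟩

lemma ham_path [DecidableEq V] (hac : G.IsAcyclic) (C : Finset V) (hne : C.Nonempty)
    (hconn : ∀ a ∈ C, ∀ b ∈ C, ReachableWithin G ↑C a b)
    (hdeg : ∀ v ∈ C, (G.neighborSet v ∩ ↑C).ncard ≤ 2) :
    ∃ l : List V, l.Nodup ∧ l.toFinset = C ∧ l.Chain' G.Adj := by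
  classical
  have main : ∀ (n : ℕ) (C : Finset V), C.card = n → C.Nonempty →
      (∀ a ∈ C, ∀ b ∈ C, ReachableWithin G ↑C a b) →
      (∀ v ∈ C, (G.neighborSet v ∩ ↑C).ncard ≤ 2) →
      ∃ l : List V, l.Nodup ∧ l.toFinset = C ∧ l.Chain' G.Adj := by
    intro n
    induction n using Nat.strong_induction_on with
    | _ n ih =>
      intro C hcard hne hconn hdeg
      rcases Nat.lt_or_ge C.card 2 with hsmall | hbig
      · obtain ⟨a, ha⟩ := hne
        have hCa : C = {a} := by
          apply Finset.eq_singleton_iff_unique_mem.2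
          refine ⟨ha, fun b hb => ?_⟩
          by_contra hba
          have : 2 ≤ C.card := Finset.one_lt_card.2 ⟨b, hb, a, ha, hba⟩
          omega
        exact ⟨[a], List.nodup_singleton a, by simp [hCa], List.isChain_singleton a⟩
      have hsum := core_handshake hac C hne hconn
      have hfinC : ∀ w : V, (G.neighborSet w ∩ ↑C).Finite :=
        fun w => C.finite_toSet.subset Set.inter_subset_right
      have hleaf : ∃ v ∈ C, (G.neighborSet v ∩ ↑C).ncard ≤ 1 := by
        by_contra hcon
        push_neg at hcon
        have h2 : 2 * C.card ≤ ∑ v ∈ C, (G.neighborSet v ∩ ↑C).ncard := by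
          calc 2 * C.card = ∑ _v ∈ C, 2 := by rw [Finset.sum_const, smul_eq_mul, mul_comm]
          _ ≤ _ := Finset.sum_le_sum (fun v hv => hcon v hv)
        omega
      obtain ⟨v, hvC, hvdeg⟩ := hleaf
      have hvdeg1 : (G.neighborSet v ∩ ↑C).ncard = 1 := by
        rcases Nat.lt_or_ge (G.neighborSet v ∩ ↑C).ncard 1 with h | h
        · exfalso
          have hzero : G.neighborSet v ∩ ↑C = ∅ := (Set.ncard_eq_zero (hfinC v)).1 (by omega)
          obtain ⟨b, hbC, hbv⟩ := Finset.exists_mem_ne (s := C) (by omega) v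
          rcases (hconn v hvC b hbC).cases_head with heq | ⟨c, hvc, _⟩
          · exact hbv heq.symm
          · have : c ∈ G.neighborSet v ∩ ↑C := ⟨hvc.1, hvc.2.2⟩
            rw [hzero] at this
            exact this
        · omega
      obtain ⟨u, hu⟩ := Set.ncard_eq_one.1 hvdeg1
      have huMemInt : u ∈ G.neighborSet v ∩ ↑C := by rw [hu]; rfl
      have huC : u ∈ C := huMemInt.2
      have huadj : G.Adj v u := huMemInt.1
      have huv : u ≠ v := huadj.ne'
      set C' := C.erase v with hC'
      have hsubC : ↑C' ⊆ (↑C : Set V) := by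
        intro x hx
        exact Finset.mem_coe.2 (Finset.mem_of_mem_erase (Finset.mem_coe.1 hx))
      have hC'card : C'.card = n - 1 := by rw [hC', Finset.card_erase_of_mem hvC, hcard]
      have huC' : u ∈ C' := Finset.mem_erase.2 ⟨huv, huC⟩
      have hconn' : ∀ a ∈ C', ∀ b ∈ C', ReachableWithin G ↑C' a b := by
        intro a ha b hb
        obtain ⟨wlk, hwlk⟩ := (hconn a (Finset.mem_of_mem_erase ha) b
          (Finset.mem_of_mem_erase hb)).exists_walk (Finset.mem_coe.2
            (Finset.mem_of_mem_erase ha))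
        set p := wlk.bypass with hp
        have hppath : p.IsPath := wlk.bypass_isPath
        have hpsup : ∀ x ∈ p.support, x ∈ (↑C : Set V) :=
          fun x hx => hwlk x (wlk.support_bypass_subset hx)
        have hvnot : v ∉ p.support := by
          intro hvp
          obtain ⟨x, y, hxy, hvx, hvy, hxs, hys⟩ := path_interior_two_nbrs p hppath hvp
            (fun h => (Finset.mem_erase.1 ha).1 h.symm)
            (fun h => (Finset.mem_erase.1 hb).1 h.symm)
          have : 2 ≤ (G.neighborSet v ∩ ↑C).ncard :=
            two_le_ncard (hfinC v) ⟨hvx, hpsup x hxs⟩ ⟨hvy, hpsup y hys⟩ hxy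
          omega
        refine reachableWithin_of_walk p (fun x hx => ?_)
        have hxC : x ∈ C := Finset.mem_coe.1 (hpsup x hx)
        exact Finset.mem_coe.2 (Finset.mem_erase.2 ⟨fun h => hvnot (h ▸ hx), hxC⟩)
      have hdeg' : ∀ w ∈ C', (G.neighborSet w ∩ ↑C').ncard ≤ 2 := by
        intro w hw
        refine le_trans (Set.ncard_le_ncard ?_ (hfinC w)) (hdeg w (Finset.mem_of_mem_erase hw))
        exact Set.inter_subset_inter_right _ hsubC
      have hltn : n - 1 < n := by omega
      obtain ⟨l', hnd', htf', hch'⟩ := ih (n - 1) hltn C' hC'card ⟨u, huC'⟩ hconn' hdeg'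
      have hvNot : v ∉ l' := by
        intro hc
        have : v ∈ C' := htf' ▸ List.mem_toFinset.2 hc
        exact (Finset.mem_erase.1 this).1 rfl
      have huMem : u ∈ l' := by
        rw [← List.mem_toFinset, htf']
        exact huC'
      have hlne : l' ≠ [] := fun h => by simp [h] at huMem
      obtain ⟨i, hgi⟩ := List.mem_iff_get.1 huMem
      have hlen : 0 < l'.length := List.length_pos_iff.2 hlne
      by_cases hi0 : i.val = 0
      · -- u is the head : prepend v
        refine ⟨v :: l', List.nodup_cons.2 ⟨hvNot, hnd'⟩, ?_, ?_⟩
        · rw [List.toFinset_cons, htf', hC', Finset.insert_erase hvC]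
        · rw [show List.Chain' G.Adj (v :: l') ↔ List.IsChain G.Adj (v :: l') from Iff.rfl,
            List.isChain_cons]
          refine ⟨fun z hz => ?_, hch'⟩
          have : z = l'.head hlne := by
            rw [List.head?_eq_head hlne] at hz
            exact (Option.mem_some_iff.1 hz).symm
          subst this
          have : l'.head hlne = u := by
            rw [List.head_eq_getElem_zero hlne, ← hgi]
            simp [← hi0]
          rw [this]
          exact huadj
      · by_cases hilast : i.val = l'.length - 1
        · -- u is the last : append v
          refine ⟨l' ++ [v], ?_, ?_, ?_⟩
          · rw [List.nodup_append]
            exact ⟨hnd', List.nodup_singleton v, fun z hz w hw' => by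
              rw [List.mem_singleton] at hw'; subst hw'; exact fun h => hvNot (h ▸ hz)⟩
          · rw [List.toFinset_append, htf', List.toFinset_cons, List.toFinset_nil]
            ext z
            simp only [Finset.mem_union, Finset.mem_insert, Finset.notMem_empty, or_false,
              hC', Finset.mem_erase]
            constructor
            · rintro (⟨_, h⟩ | rfl)
              · exact h
              · exact hvC
            · intro hz
              by_cases hzv : z = v
              · exact Or.inr hzv
              · exact Or.inl ⟨hzv, hz⟩
          · rw [show List.Chain' G.Adj (l' ++ [v]) ↔ List.IsChain G.Adj (l' ++ [v]) from Iff.rfl,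
              List.isChain_append]
            refine ⟨hch', List.isChain_singleton v, fun z hz y hy => ?_⟩
            have hyv : y = v := by
              simp only [List.head?_cons, Option.mem_some_iff] at hy
              exact hy.symm
            have hz' : z = l'.getLast hlne := by
              rw [List.getLast?_eq_getLast_of_ne_nil hlne] at hz
              exact (Option.mem_some_iff.1 hz).symm
            have hidx : (⟨l'.length - 1, by omega⟩ : Fin l'.length) = i := by
              apply Fin.ext
              simp only []
              omega
            have hzu : z = u := by
              rw [hz', List.getLast_eq_getElem, ← hgi, ← hidx]; rfl
            subst hyv
            rw [hzu]
            exact huadj.symm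
        · -- u is interior : contradiction
          exfalso
          have hi1 : i.val + 1 < l'.length := by omega
          have hadjxy : ∀ (k : ℕ) (h : k + 1 < l'.length),
              G.Adj (l'.get ⟨k, by omega⟩) (l'.get ⟨k + 1, h⟩) :=
            fun k h => List.isChain_iff_getElem.1 hch' k h
          set x := l'.get ⟨i.val - 1, by omega⟩ with hx
          set y := l'.get ⟨i.val + 1, hi1⟩ with hy
          have hax : G.Adj x u := by
            have := hadjxy (i.val - 1) (by omega)
            have hfin : (⟨i.val - 1 + 1, by omega⟩ : Fin l'.length) = i :=
              Fin.ext (show i.val - 1 + 1 = i.val by omega)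
            rw [hfin, hgi] at this
            exact this
          have hay : G.Adj u y := by
            have := hadjxy i.val (by omega)
            have hfin : (⟨i.val, by omega⟩ : Fin l'.length) = i := Fin.ext rfl
            rw [hfin, hgi] at this
            exact this
          have hxyne : x ≠ y := by
            intro hc
            have hfeq := List.nodup_iff_injective_get.1 hnd' (hx ▸ hy ▸ hc)
            have h2 : i.val - 1 = i.val + 1 := congrArg Fin.val hfeq
            omega
          have hxC' : x ∈ C' := htf' ▸ List.mem_toFinset.2 (List.get_mem l' _)
          have hyC' : y ∈ C' := htf' ▸ List.mem_toFinset.2 (List.get_mem l' _)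
          have h3 : 3 ≤ (G.neighborSet u ∩ ↑C).ncard := by
            refine three_le_ncard (hfinC u) (a := v) (b := x) (c := y)
              ⟨huadj.symm, Finset.mem_coe.2 hvC⟩
              ⟨hax.symm, hsubC (Finset.mem_coe.2 hxC')⟩
              ⟨hay, hsubC (Finset.mem_coe.2 hyC')⟩
              ?_ ?_ hxyne
            · intro hc; exact (Finset.mem_erase.1 hxC').1 hc.symm
            · intro hc; exact (Finset.mem_erase.1 hyC').1 hc.symm
          have := hdeg u huC
          omega
  exact main C.card C rfl hne hconn hdeg

end ham

section banal
variable {G : SimpleGraph V} {o : V}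

lemma ncard_inter_eq_filter_card [DecidableEq V] (v : V) (Y : Finset V)
    [DecidablePred (G.Adj v)] :
    (G.neighborSet v ∩ ↑Y).ncard = (Y.filter (fun u => G.Adj v u)).card := by
  rw [← Set.ncard_coe_finset]
  congr 1
  ext u
  simp only [Finset.coe_filter, Set.mem_setOf_eq, Set.mem_inter_iff,
    SimpleGraph.mem_neighborSet, Finset.mem_coe]
  tauto

lemma sum_ncard_adj_swap (D S : Finset V) :
    ∑ v ∈ D, (G.neighborSet v ∩ ↑S).ncard = ∑ w ∈ S, (G.neighborSet w ∩ ↑D).ncard := by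
  classical
  have h1 : ∀ (X Y : Finset V), ∑ v ∈ X, (G.neighborSet v ∩ ↑Y).ncard
      = ∑ v ∈ X, ∑ u ∈ Y, (if G.Adj v u then 1 else 0) := by
    intro X Y
    refine Finset.sum_congr rfl (fun v _ => ?_)
    rw [ncard_inter_eq_filter_card v Y, Finset.card_filter]
  rw [h1, h1, Finset.sum_comm]
  refine Finset.sum_congr rfl (fun v _ => Finset.sum_congr rfl (fun u _ => ?_))
  congr 1
  simp only [eq_iff_iff]
  constructor <;> exact fun h => h.symm

lemma B_bound (hconn : G.Connected) (hac : G.IsAcyclic)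
    (hlf : ∀ v : V, (G.neighborSet v).Finite) {L : ℕ} (hL : 1 ≤ L) (hC2 : CondC2 G o L)
    (B : Finset V) (hBne : B.Nonempty) (hBsub : ↑B ⊆ Backbone G o)
    (hBconn : ∀ a ∈ B, ∀ b ∈ B, ReachableWithin G ↑B a b) :
    B.card ≤ (L + 1) * (2 * ∑ v ∈ B, (G.neighborSet v ∩ (Backbone G o \ ↑B)).ncard) := by
  classical
  set 𝔅 := Backbone G o with h𝔅
  set outR := ∑ v ∈ B, (G.neighborSet v ∩ (𝔅 \ ↑B)).ncard with houtR
  set pD : V → Prop := fun v => degIn G 𝔅 v = 2 ∧ (G.neighborSet v ∩ 𝔅) ⊆ ↑B with hpD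
  set D := B.filter pD with hD
  set S := B.filter (fun v => ¬ pD v) with hS
  have hDB : D ⊆ B := Finset.filter_subset _ _
  have hSB : S ⊆ B := Finset.filter_subset _ _
  have hfin : ∀ (v : V) (t : Set V), (G.neighborSet v ∩ t).Finite :=
    fun v t => (hlf v).subset Set.inter_subset_left
  -- basic degree facts for D vertices
  have hDdeg : ∀ v ∈ D, (G.neighborSet v ∩ ↑B).ncard = 2 ∧ G.neighborSet v ∩ (𝔅 \ ↑B) = ∅ := by
    intro v hv
    obtain ⟨hvB, h2, hsub⟩ : v ∈ B ∧ degIn G 𝔅 v = 2 ∧ (G.neighborSet v ∩ 𝔅) ⊆ ↑B := by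
      have := Finset.mem_filter.1 hv
      exact ⟨this.1, this.2.1, this.2.2⟩
    have hBb : (G.neighborSet v ∩ ↑B) = (G.neighborSet v ∩ 𝔅) := by
      apply Set.eq_of_subset_of_subset
      · exact Set.inter_subset_inter_right _ (fun x hx => hBsub hx)
      · intro x hx
        exact ⟨hx.1, hsub hx⟩
    constructor
    · rw [hBb]; exact h2
    · ext x
      simp only [Set.mem_inter_iff, Set.mem_diff, Set.mem_empty_iff_false, iff_false, not_and,
        and_imp]
      intro hadj hb hnB
      exact hnB (hsub ⟨hadj, hb⟩)
  -- split of neighbourhoods within the backbone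
  have hsplit : ∀ v ∈ B, degIn G 𝔅 v = (G.neighborSet v ∩ ↑B).ncard
      + (G.neighborSet v ∩ (𝔅 \ ↑B)).ncard := by
    intro v hv
    rw [degIn]
    rw [← Set.ncard_union_eq ?dj (hfin v _) (hfin v _)]
    · congr 1
      rw [← Set.inter_union_distrib_left]
      congr 1
      rw [Set.union_diff_cancel]
      intro x hx
      exact hBsub hx
    case dj =>
      refine Set.disjoint_left.2 ?_
      rintro x ⟨_, hxB⟩ ⟨_, _, hxnB⟩
      exact hxnB hxB
  -- handshake on B
  have hcore := core_handshake hac B hBne hBconn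
  have hdegsum : ∑ v ∈ B, degIn G 𝔅 v = 2 * (B.card - 1) + outR := by
    rw [Finset.sum_congr rfl hsplit, Finset.sum_add_distrib, hcore]
  -- S1 and S2
  set S1 := B.filter (fun v => ¬ ((G.neighborSet v ∩ 𝔅) ⊆ ↑B)) with hS1
  set S2 := (B.erase o).filter (fun v => ((G.neighborSet v ∩ 𝔅) ⊆ ↑B) ∧ ¬ pD v) with hS2
  have hScover : S ⊆ S1 ∪ S2 ∪ {o} := by
    intro w hw
    obtain ⟨hwB, hwnp⟩ := Finset.mem_filter.1 hw
    by_cases hsub : (G.neighborSet w ∩ 𝔅) ⊆ ↑B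
    · by_cases hwo : w = o
      · exact Finset.mem_union_right _ (by simp [hwo])
      · refine Finset.mem_union_left _ (Finset.mem_union_right _ ?_)
        exact Finset.mem_filter.2 ⟨Finset.mem_erase.2 ⟨hwo, hwB⟩, hsub, hwnp⟩
    · exact Finset.mem_union_left _ (Finset.mem_union_left _ (Finset.mem_filter.2 ⟨hwB, hsub⟩))
  -- S1 is controlled by outR
  have hS1out : S1.card ≤ outR := by
    have h1 : ∀ v ∈ S1, 1 ≤ (G.neighborSet v ∩ (𝔅 \ ↑B)).ncard := by
      intro v hv
      obtain ⟨hvB, hnsub⟩ := Finset.mem_filter.1 hv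
      rw [Set.not_subset] at hnsub
      obtain ⟨x, hx, hxnB⟩ := hnsub
      rw [Nat.succ_le_iff, Set.ncard_pos (hfin v _)]
      exact ⟨x, hx.1, hx.2, fun hc => hxnB hc⟩
    calc S1.card = ∑ _v ∈ S1, 1 := by simp
      _ ≤ ∑ v ∈ S1, (G.neighborSet v ∩ (𝔅 \ ↑B)).ncard := Finset.sum_le_sum h1
      _ ≤ outR := Finset.sum_le_sum_of_subset (Finset.filter_subset _ _)
  -- S2 vertices have backbone degree at least 3
  have hS2deg : ∀ v ∈ S2, 3 ≤ degIn G 𝔅 v := by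
    intro v hv
    obtain ⟨hve, hsub, hnp⟩ : v ∈ B.erase o ∧ ((G.neighborSet v ∩ 𝔅) ⊆ ↑B) ∧ ¬ pD v := by
      have := Finset.mem_filter.1 hv
      exact ⟨this.1, this.2.1, this.2.2⟩
    have h2 : 2 ≤ degIn G 𝔅 v :=
      two_le_degIn_backbone hlf (hBsub (Finset.mem_coe.2 (Finset.mem_of_mem_erase hve)))
        (Finset.mem_erase.1 hve).1
    have hne2 : degIn G 𝔅 v ≠ 2 := fun hc => hnp ⟨hc, hsub⟩
    omega
  -- counting the degree sum from below
  have hlow : 2 * B.card + S2.card ≤ ∑ v ∈ B, degIn G 𝔅 v + 1 := by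
    have hS2sub : S2 ⊆ B.erase o := Finset.filter_subset _ _
    have herase : ∀ v ∈ B.erase o, 2 + (if v ∈ S2 then 1 else 0) ≤ degIn G 𝔅 v := by
      intro v hv
      by_cases hvS2 : v ∈ S2
      · simpa [hvS2] using hS2deg v hvS2
      · simp only [hvS2, if_false, add_zero]
        exact two_le_degIn_backbone hlf (hBsub (Finset.mem_coe.2 (Finset.mem_of_mem_erase hv)))
          (Finset.mem_erase.1 hv).1
    have hsum_erase : 2 * (B.erase o).card + S2.card ≤ ∑ v ∈ B.erase o, degIn G 𝔅 v := by
      calc 2 * (B.erase o).card + S2.card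
          = ∑ v ∈ B.erase o, (2 + (if v ∈ S2 then 1 else 0)) := by
            rw [Finset.sum_add_distrib, Finset.sum_const, Finset.sum_ite_mem,
              Finset.inter_eq_right.2 hS2sub]
            simp [mul_comm]
        _ ≤ _ := Finset.sum_le_sum herase
    by_cases ho : o ∈ B
    · have h1 : 1 ≤ degIn G 𝔅 o := one_le_degIn_backbone_root hlf (hBsub (Finset.mem_coe.2 ho))
      have : ∑ v ∈ B, degIn G 𝔅 v = degIn G 𝔅 o + ∑ v ∈ B.erase o, degIn G 𝔅 v :=
        (Finset.add_sum_erase B _ ho).symm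
      have hcerase : (B.erase o).card = B.card - 1 := Finset.card_erase_of_mem ho
      have hBpos : 1 ≤ B.card := hBne.card_pos
      omega
    · have : B.erase o = B := Finset.erase_eq_of_notMem ho
      rw [this] at hsum_erase
      omega
  -- conclude S.card ≤ 2 * outR
  have hScard : S.card ≤ 2 * outR := by
    have h1 : S.card ≤ S1.card + S2.card + 1 := by
      calc S.card ≤ (S1 ∪ S2 ∪ {o}).card := Finset.card_le_card hScover
        _ ≤ (S1 ∪ S2).card + ({o} : Finset V).card := Finset.card_union_le _ _
        _ ≤ S1.card + S2.card + 1 := by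
            have := Finset.card_union_le S1 S2
            simp only [Finset.card_singleton]
            omega
    have hBpos : 1 ≤ B.card := hBne.card_pos
    omega
  -- components of D
  set comp : V → Finset V := fun v => D.filter (fun w => ReachableWithin G ↑D v w) with hcomp
  have hmemcomp : ∀ v ∈ D, v ∈ comp v := fun v hv => Finset.mem_filter.2 ⟨hv, .refl⟩
  have hcompsub : ∀ v, comp v ⊆ D := fun v => Finset.filter_subset _ _
  have hcompeq : ∀ v ∈ D, ∀ w, w ∈ comp v → comp w = comp v := by
    intro v hv w hw
    obtain ⟨hwD, hreach⟩ := Finset.mem_filter.1 hw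
    ext x
    simp only [hcomp, Finset.mem_filter]
    constructor
    · rintro ⟨hxD, hx⟩; exact ⟨hxD, hreach.trans hx⟩
    · rintro ⟨hxD, hx⟩; exact ⟨hxD, hreach.symm.trans hx⟩
  set 𝒞 := D.image comp with h𝒞
  have hdisj : ∀ c1 ∈ 𝒞, ∀ c2 ∈ 𝒞, c1 ≠ c2 → Disjoint c1 c2 := by
    intro c1 hc1 c2 hc2 hne12
    obtain ⟨v1, hv1, rfl⟩ := Finset.mem_image.1 hc1
    obtain ⟨v2, hv2, rfl⟩ := Finset.mem_image.1 hc2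
    rw [Finset.disjoint_left]
    intro x hx1 hx2
    exact hne12 ((hcompeq v1 hv1 x hx1).symm.trans (hcompeq v2 hv2 x hx2))
  have hDunion : D = 𝒞.biUnion id := by
    ext x
    simp only [Finset.mem_biUnion, id]
    constructor
    · intro hx; exact ⟨comp x, Finset.mem_image_of_mem comp hx, hmemcomp x hx⟩
    · rintro ⟨c, hc, hxc⟩
      obtain ⟨v, hv, rfl⟩ := Finset.mem_image.1 hc
      exact hcompsub v hxc
  have hDcard : D.card = ∑ c ∈ 𝒞, c.card := by
    rw [hDunion]
    exact Finset.card_biUnion hdisj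
  -- each component is connected within itself
  have hcompconn : ∀ v ∈ D, ∀ a ∈ comp v, ∀ b ∈ comp v,
      ReachableWithin G ↑(comp v) a b := by
    intro v hv a ha b hb
    have key : ∀ x, x ∈ comp v → ∀ {y}, ReachableWithin G ↑D x y →
        y ∈ comp v ∧ ReachableWithin G ↑(comp v) x y := by
      intro x hx y hreach
      induction hreach with
      | refl => exact ⟨hx, .refl⟩
      | @tail m y h1 h2 ih =>
        have hyD : y ∈ D := Finset.mem_coe.1 h2.2.2
        have hyc : y ∈ comp v := by
          refine Finset.mem_filter.2 ⟨hyD, ?_⟩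
          have hvx : ReachableWithin G ↑D v x := (Finset.mem_filter.1 hx).2
          exact (hvx.trans h1).tail h2
        exact ⟨hyc, ih.2.tail ⟨h2.1, Finset.mem_coe.2 ih.1, Finset.mem_coe.2 hyc⟩⟩
    have hav : ReachableWithin G ↑D a b := by
      have h1 : ReachableWithin G ↑D v a := (Finset.mem_filter.1 ha).2
      have h2 : ReachableWithin G ↑D v b := (Finset.mem_filter.1 hb).2
      exact h1.symm.trans h2
    exact (key a ha hav).2
  -- each component has at most L vertices (via C2)
  have hcompL : ∀ c ∈ 𝒞, c.card ≤ L := by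
    intro c hc
    obtain ⟨v, hv, rfl⟩ := Finset.mem_image.1 hc
    by_contra hbig
    push_neg at hbig
    have hcne : (comp v).Nonempty := ⟨v, hmemcomp v hv⟩
    have hcdeg : ∀ w ∈ comp v, (G.neighborSet w ∩ ↑(comp v)).ncard ≤ 2 := by
      intro w hw
      have hwD := hcompsub v hw
      have h2 := (hDdeg w hwD).1
      refine le_trans (Set.ncard_le_ncard ?_ (hfin w _)) (le_of_eq h2)
      exact Set.inter_subset_inter_right _ (fun x hx => Finset.mem_coe.2
        (hDB (hcompsub v (Finset.mem_coe.1 hx))))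
    obtain ⟨l, hlnd, hltf, hlch⟩ := ham_path hac (comp v) hcne (hcompconn v hv) hcdeg
    have hllen : l.length = (comp v).card := by
      rw [← hltf, List.card_toFinset, List.dedup_eq_self.2 hlnd]
    refine hC2 ⟨fun n => l.getD n o, ?_, ?_, ?_, ?_⟩
    · intro j hj
      have hjl : j < l.length := by omega
      show l.getD j o ∈ Backbone G o
      rw [List.getD_eq_getElem l o hjl]
      have : l[j] ∈ comp v := hltf ▸ List.mem_toFinset.2 (l.getElem_mem hjl)
      exact hBsub (Finset.mem_coe.2 (hDB (hcompsub v this)))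
    · intro j hj
      have hj1 : j + 1 < l.length := by omega
      show G.Adj (l.getD j o) (l.getD (j + 1) o)
      rw [List.getD_eq_getElem l o (by omega), List.getD_eq_getElem l o hj1]
      have := List.isChain_iff_getElem.1 hlch j (by omega)
      simpa using this
    · intro j k hj hk hjk
      have hjk : l.getD j o = l.getD k o := hjk
      rw [List.getD_eq_getElem l o (by omega), List.getD_eq_getElem l o (by omega)] at hjk
      have h2 : (⟨j, by omega⟩ : Fin l.length) = ⟨k, by omega⟩ :=
        List.nodup_iff_injective_getElem.1 hlnd (by simpa using hjk)
      have h3 : j = k := congrArg Fin.val h2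
      exact h3
    · intro j hj
      have hjl : j < l.length := by omega
      show degIn G (Backbone G o) (l.getD j o) = 2
      rw [List.getD_eq_getElem l o hjl]
      have hmem : l[j] ∈ comp v := hltf ▸ List.mem_toFinset.2 (l.getElem_mem hjl)
      exact ((Finset.mem_filter.1 (hcompsub v hmem)).2).1
  -- each component sends exactly two edges into S
  have hchain2 : ∀ c ∈ 𝒞, ∑ w ∈ c, (G.neighborSet w ∩ ↑S).ncard = 2 := by
    intro c hc
    obtain ⟨v, hv, rfl⟩ := Finset.mem_image.1 hc
    have hcne : (comp v).Nonempty := ⟨v, hmemcomp v hv⟩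
    have hcorec := core_handshake hac (comp v) hcne (hcompconn v hv)
    have hsplitc : ∀ w ∈ comp v, (G.neighborSet w ∩ ↑B).ncard
        = (G.neighborSet w ∩ ↑(comp v)).ncard + (G.neighborSet w ∩ ↑S).ncard := by
      intro w hw
      have hwD := hcompsub v hw
      have hunion : (G.neighborSet w ∩ ↑B)
          = (G.neighborSet w ∩ ↑(comp v)) ∪ (G.neighborSet w ∩ ↑S) := by
        ext u
        simp only [Set.mem_inter_iff, Set.mem_union, SimpleGraph.mem_neighborSet,
          Finset.mem_coe]
        constructor
        · rintro ⟨hadj, huB⟩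
          by_cases hupD : pD u
          · refine Or.inl ⟨hadj, ?_⟩
            have huD : u ∈ D := Finset.mem_filter.2 ⟨huB, hupD⟩
            refine Finset.mem_filter.2 ⟨huD, ?_⟩
            have hvw : ReachableWithin G ↑D v w := (Finset.mem_filter.1 hw).2
            exact hvw.tail ⟨hadj, Finset.mem_coe.2 hwD, Finset.mem_coe.2 huD⟩
          · exact Or.inr ⟨hadj, Finset.mem_filter.2 ⟨huB, hupD⟩⟩
        · rintro (⟨hadj, hu⟩ | ⟨hadj, hu⟩)
          · exact ⟨hadj, hDB (hcompsub v hu)⟩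
          · exact ⟨hadj, hSB hu⟩
      have hdisjc : Disjoint (G.neighborSet w ∩ ↑(comp v)) (G.neighborSet w ∩ ↑S) := by
        refine Set.disjoint_left.2 ?_
        rintro u ⟨_, hu1⟩ ⟨_, hu2⟩
        have huD : u ∈ D := hcompsub v (Finset.mem_coe.1 hu1)
        have := (Finset.mem_filter.1 (Finset.mem_coe.1 hu2)).2
        exact this (Finset.mem_filter.1 huD).2
      rw [hunion, Set.ncard_union_eq hdisjc (hfin w _) (hfin w _)]
    have hsum2 : ∑ w ∈ comp v, (G.neighborSet w ∩ ↑B).ncard = 2 * (comp v).card := by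
      rw [Finset.sum_congr rfl (fun w hw => (hDdeg w (hcompsub v hw)).1), Finset.sum_const,
        smul_eq_mul, mul_comm]
    have := Finset.sum_congr rfl hsplitc
    rw [Finset.sum_add_distrib, hcorec] at this
    rw [hsum2] at this
    have hcpos : 1 ≤ (comp v).card := hcne.card_pos
    omega
  -- total number of S-D edges
  have hSD : ∑ w ∈ S, (G.neighborSet w ∩ ↑D).ncard = 2 * 𝒞.card := by
    rw [← sum_ncard_adj_swap]
    have : ∑ w ∈ D, (G.neighborSet w ∩ ↑S).ncard
        = ∑ c ∈ 𝒞, ∑ w ∈ c, (G.neighborSet w ∩ ↑S).ncard := by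
      conv_lhs => rw [hDunion]
      exact Finset.sum_biUnion hdisj
    rw [this, Finset.sum_congr rfl hchain2, Finset.sum_const, smul_eq_mul, mul_comm]
  have hSDle : ∑ w ∈ S, (G.neighborSet w ∩ ↑D).ncard
      ≤ ∑ w ∈ S, (G.neighborSet w ∩ ↑B).ncard := by
    refine Finset.sum_le_sum (fun w _ => Set.ncard_le_ncard ?_ (hfin w _))
    exact Set.inter_subset_inter_right _ (fun x hx => Finset.mem_coe.2
      (hDB (Finset.mem_coe.1 hx)))
  have hDBsum : ∑ w ∈ D, (G.neighborSet w ∩ ↑B).ncard = 2 * D.card := by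
    rw [Finset.sum_congr rfl (fun w hw => (hDdeg w hw).1), Finset.sum_const, smul_eq_mul,
      mul_comm]
  have hsplitsum : ∑ w ∈ D, (G.neighborSet w ∩ ↑B).ncard
      + ∑ w ∈ S, (G.neighborSet w ∩ ↑B).ncard = 2 * (B.card - 1) := by
    rw [← hcore, hD, hS]
    exact Finset.sum_filter_add_sum_filter_not B pD _
  have hcards : D.card + S.card = B.card := by
    rw [hD, hS]
    exact Finset.card_filter_add_card_filter_not (p := pD)
  have hDL : D.card ≤ L * 𝒞.card := by
    calc D.card = ∑ c ∈ 𝒞, c.card := hDcard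
      _ ≤ ∑ _c ∈ 𝒞, L := Finset.sum_le_sum hcompL
      _ = L * 𝒞.card := by rw [Finset.sum_const, smul_eq_mul, mul_comm]
  -- final arithmetic
  have hBpos : 1 ≤ B.card := hBne.card_pos
  have hkS : 𝒞.card ≤ S.card := by omega
  have h1 : B.card ≤ (L + 1) * S.card := by
    have h2 : L * 𝒞.card ≤ L * S.card := Nat.mul_le_mul_left _ hkS
    calc B.card = D.card + S.card := hcards.symm
      _ ≤ L * 𝒞.card + S.card := by omega
      _ ≤ L * S.card + S.card := by omega
      _ = (L + 1) * S.card := by ring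
  calc B.card ≤ (L + 1) * S.card := h1
    _ ≤ (L + 1) * (2 * outR) := Nat.mul_le_mul_left _ hScard

end banal


end aux

/-- If an infinite locally finite tree satisfies (C1) and (C2) with
constant `L ≥ 1`, then `9 L² |∂K| ≥ |K|_D` for every finite nonempty connected `K`;
equivalently the edge-expansion constant is at least `1/(9 L²)`. -/
theorem statement4 {V : Type*} (G : SimpleGraph V) (o : V) (L : ℕ) (hL : 1 ≤ L)
    (hT : G.IsTree) (hinf : Infinite V)
    (hlf : ∀ v : V, (G.neighborSet v).Finite)
    (hC1 : CondC1 G o L) (hC2 : CondC2 G o L) :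
    (∀ K : Finset V, K.Nonempty → ConnectedIn G ↑K →
      degSumF G K ≤ 9 * L ^ 2 * (edgeBdry G ↑K).ncard) ∧
    1 / (9 * (L : ℝ) ^ 2) ≤ expConst G := by
  classical
  have hconn : G.Connected := hT.isConnected
  have hac : G.IsAcyclic := hT.IsAcyclic
  have main : ∀ K : Finset V, K.Nonempty → ConnectedIn G ↑K →
      degSumF G K ≤ 9 * L ^ 2 * (edgeBdry G ↑K).ncard := by
    intro K hKne hKconn
    set β := (edgeBdry G (↑K : Set V)).ncard with hβ
    have hβeq : β = ∑ v ∈ K, (G.neighborSet v \ ↑K).ncard := (edgeBdry_ncard_eq hlf K).1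
    have hβ1 : 1 ≤ β := one_le_bdry hlf hconn hKne hinf
    have hKconn' : ∀ a ∈ K, ∀ b ∈ K, ReachableWithin G (↑K) a b :=
      fun a ha b hb => hKconn a (Finset.mem_coe.2 ha) b (Finset.mem_coe.2 hb)
    have hF1 : degSumF G K + 2 = 2 * K.card + β := by
      rw [hβeq]; exact degSumF_eq hac hlf hKne hKconn'
    set B := K.filter (· ∈ Backbone G o) with hB
    by_cases hBne : B.Nonempty
    · -- case : K meets the backbone
      obtain ⟨b, hbB⟩ := hBne
      obtain ⟨hbK, hb𝔅⟩ := Finset.mem_filter.1 hbB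
      have hK_LB : K.card ≤ L * B.card :=
        card_le_L_mul_B hconn hac hlf hC1 K hKconn hbK hb𝔅
      have hBsub : (↑B : Set V) ⊆ Backbone G o := by
        intro x hx
        exact (Finset.mem_filter.1 (Finset.mem_coe.1 hx)).2
      have hBconn : ∀ a ∈ B, ∀ b ∈ B, ReachableWithin G ↑B a b := by
        intro a ha b hb
        obtain ⟨haK, ha𝔅⟩ := Finset.mem_filter.1 ha
        obtain ⟨hbK', hb𝔅'⟩ := Finset.mem_filter.1 hb
        obtain ⟨w, hw⟩ := (hKconn' a haK b hbK').exists_walk (Finset.mem_coe.2 haK)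
        set p := w.bypass with hp
        have hppath : p.IsPath := w.bypass_isPath
        have hpK : ∀ x ∈ p.support, x ∈ (↑K : Set V) :=
          fun x hx => hw x (w.support_bypass_subset hx)
        have hp𝔅 := backbone_path_closed hac ha𝔅 hb𝔅' p hppath
        refine reachableWithin_of_walk p (fun x hx => ?_)
        exact Finset.mem_coe.2 (Finset.mem_filter.2 ⟨Finset.mem_coe.1 (hpK x hx), hp𝔅 x hx⟩)
      have hout : ∑ v ∈ B, (G.neighborSet v ∩ (Backbone G o \ ↑B)).ncard ≤ β := by
        rw [hβeq]
        have hposet : ∀ v ∈ B, (G.neighborSet v ∩ (Backbone G o \ ↑B)).ncard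
            ≤ (G.neighborSet v \ ↑K).ncard := by
          intro v hv
          refine Set.ncard_le_ncard ?_ ((hlf v).subset Set.diff_subset)
          rintro x ⟨hadj, hx𝔅, hxnB⟩
          refine ⟨hadj, fun hxK => hxnB ?_⟩
          exact Finset.mem_coe.2 (Finset.mem_filter.2 ⟨Finset.mem_coe.1 hxK, hx𝔅⟩)
        calc ∑ v ∈ B, (G.neighborSet v ∩ (Backbone G o \ ↑B)).ncard
            ≤ ∑ v ∈ B, (G.neighborSet v \ ↑K).ncard := Finset.sum_le_sum hposet
          _ ≤ ∑ v ∈ K, (G.neighborSet v \ ↑K).ncard :=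
              Finset.sum_le_sum_of_subset (Finset.filter_subset _ _)
      have hBbound := B_bound hconn hac hlf hL hC2 B ⟨b, hbB⟩ hBsub hBconn
      have hBcard : B.card ≤ (L + 1) * (2 * β) := by
        refine le_trans hBbound (Nat.mul_le_mul_left _ (by omega))
      have hKcard : K.card ≤ L * ((L + 1) * (2 * β)) :=
        le_trans hK_LB (Nat.mul_le_mul_left _ hBcard)
      -- arithmetic : degSum = 2|K| + β - 2 ≤ 4L(L+1)β + β - 2 ≤ 9 L² β
      have harith : 2 * (L * ((L + 1) * (2 * β))) + β ≤ 9 * L ^ 2 * β + 2 := by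
        have h5 : 4 * L + 1 ≤ 5 * L ^ 2 := by nlinarith
        nlinarith
      omega
    · -- case : K misses the backbone
      rw [Finset.not_nonempty_iff_eq_empty] at hBne
      obtain ⟨a, haK⟩ := hKne
      have hKsub : ∀ x ∈ K, x ∈ (Backbone G o)ᶜ := by
        intro x hx
        intro hc
        have : x ∈ B := Finset.mem_filter.2 ⟨hx, hc⟩
        rw [hBne] at this
        exact absurd this (Finset.notMem_empty x)
      have hcompfin := finite_componentIn_compl (o := o) hconn hac hlf a a
      have hKcomp : K ⊆ hcompfin.toFinset := by
        intro w hw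
        rw [Set.Finite.mem_toFinset]
        refine ⟨Or.inl (hKsub w hw), ?_⟩
        refine (hKconn' a haK w hw).mono ?_
        intro x hx
        exact Or.inl (hKsub x (Finset.mem_coe.1 hx))
      have hKL : K.card ≤ L := by
        calc K.card ≤ hcompfin.toFinset.card := Finset.card_le_card hKcomp
          _ = (componentIn G ((Backbone G o)ᶜ ∪ {a}) a).ncard :=
              (Set.ncard_eq_toFinset_card _ hcompfin).symm
          _ ≤ L := hC1 a a (Or.inr rfl)
      have harith : 2 * L + β ≤ 9 * L ^ 2 * β + 2 := by
        have hLL : L ≤ L ^ 2 := by nlinarith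
        have c1 : 2 * L * 1 ≤ 2 * L * β := Nat.mul_le_mul_left (2 * L) hβ1
        have c3 : 2 * (L * β) ≤ 2 * (L ^ 2 * β) :=
          Nat.mul_le_mul_left 2 (Nat.mul_le_mul_right β hLL)
        have c5 : 1 * β ≤ L ^ 2 * β := Nat.mul_le_mul_right β (by nlinarith)
        nlinarith [c1, c3, c5]
      omega
  refine ⟨main, ?_⟩
  -- the expansion constant bound
  have hLpos : (0 : ℝ) < 9 * (L : ℝ) ^ 2 := by positivity
  refine le_csInf ?_ ?_
  · -- the defining set is nonempty
    refine ⟨((edgeBdry G ↑({o} : Finset V)).ncard : ℝ) / (degSumF G {o} : ℝ), {o},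
      ⟨o, Finset.mem_singleton_self o⟩, ?_, rfl⟩
    intro a ha b hb
    simp only [Finset.coe_singleton, Set.mem_singleton_iff] at ha hb
    subst ha; subst hb
    exact .refl
  · rintro x ⟨K, hKne, hKconn, rfl⟩
    have hbound := main K hKne hKconn
    have hβ1 : 1 ≤ (edgeBdry G (↑K : Set V)).ncard := one_le_bdry hlf hconn hKne hinf
    have hdeg1 : 1 ≤ degSumF G K := by
      obtain ⟨a, ha⟩ := hKne
      have : 1 ≤ (G.neighborSet a).ncard := by
        obtain ⟨w, hw⟩ := exists_ne a
        obtain ⟨p⟩ := hconn.preconnected a w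
        have hnn : ¬ p.Nil := SimpleGraph.Walk.not_nil_of_ne (Ne.symm hw)
        obtain ⟨u, hadj, _, _⟩ := SimpleGraph.Walk.not_nil_iff.1 hnn
        rw [Nat.succ_le_iff, Set.ncard_pos (hlf a)]
        exact ⟨u, hadj⟩
      refine le_trans this ?_
      exact Finset.single_le_sum (f := fun v => (G.neighborSet v).ncard)
        (fun v _ => Nat.zero_le _) ha
    have hdpos : (0 : ℝ) < (degSumF G K : ℝ) := by exact_mod_cast hdeg1
    rw [div_le_div_iff₀ hLpos hdpos, one_mul]
    calc (degSumF G K : ℝ) ≤ ((9 * L ^ 2 * (edgeBdry G ↑K).ncard : ℕ) : ℝ) := by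
          exact_mod_cast hbound
      _ = ((edgeBdry G ↑K).ncard : ℝ) * (9 * (L : ℝ) ^ 2) := by push_cast; ring
end
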